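/- arXiv:2106.02309 — 3 statements merged into one kernel-verified Lean document; each statement's English description precedes it below -/
import Mathlib

section
/- Let B be a DFA. Then there exists a DFA B' such that L(B') = L(B) and ent(B) = ent(B') = width(B'). -/
/-- A deterministic finite automaton with a (possibly partial) transition function,
a unique initial state and a set of final states. -/
structure PDFA (α : Type*) (σ : Type*) where
  step : σ → α → Option σ
  start : σ
  accept : Set σ

namespace PDFA

variable {α : Type*} {σ : Type*}

/-- The transition function extended to strings (read left to right). -/
def evalFrom (M : PDFA α σ) : σ → List α → Option σ
  | q, [] => some q
  | q, a :: w =>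
    match M.step q a with
    | none => none
    | some q' => M.evalFrom q' w

/-- `δ(s, w)`. -/
def eval (M : PDFA α σ) (w : List α) : Option σ :=
  M.evalFrom M.start w

/-- The language accepted by the automaton. -/
def language (M : PDFA α σ) : Set (List α) :=
  {w | ∃ q, M.eval w = some q ∧ q ∈ M.accept}

/-- `Pref(L(M))`: the set of prefixes of accepted words. -/
def prefLang (M : PDFA α σ) : Set (List α) :=
  {w | ∃ v, w ++ v ∈ M.language}

/-- `I_q`: the words of `Pref(L(M))` reaching state `q`. -/
def I (M : PDFA α σ) (q : σ) : Set (List α) :=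
  {w | w ∈ M.prefLang ∧ M.eval w = some q}

/-- Every state is reachable from the initial state, and from every state a final
state can be reached. -/
def Trim (M : PDFA α σ) : Prop :=
  (∀ q : σ, ∃ w : List α, M.eval w = some q) ∧
  (∀ q : σ, ∃ w : List α, ∃ q' : σ, M.evalFrom q w = some q' ∧ q' ∈ M.accept)

variable [LinearOrder α]

/-- A sequence of words which is monotone (non-decreasing or non-increasing) in the
co-lexicographic order (i.e., lexicographic order of the reversed words). -/
def MonotoneColex (x : ℕ → List α) : Prop :=
  (∀ i j : ℕ, i ≤ j → (x i).reverse ≤ (x j).reverse) ∨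
  (∀ i j : ℕ, i ≤ j → (x j).reverse ≤ (x i).reverse)

/-- A set of states is entangled if a single monotone sequence of words of
`Pref(L(M))` reaches each of its states infinitely many times. -/
def EntangledStates (M : PDFA α σ) (S : Set σ) : Prop :=
  ∃ x : ℕ → List α, (∀ i, x i ∈ M.prefLang) ∧ MonotoneColex x ∧
    ∀ q ∈ S, ∀ n : ℕ, ∃ i : ℕ, n ≤ i ∧ M.eval (x i) = some q

/-- `ent(M)`: the maximum cardinality of an entangled set of states. -/
noncomputable def ent (M : PDFA α σ) [Fintype σ] : ℕ :=
  sSup {n : ℕ | ∃ S : Finset σ, S.card = n ∧ M.EntangledStates ↑S}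

/-- The strict co-lex partial order on states: `q₁ ≺ q₂` iff `q₁ ≠ q₂` and every word
reaching `q₁` is co-lexicographically smaller than every word reaching `q₂`. -/
def stateLt (M : PDFA α σ) (q₁ q₂ : σ) : Prop :=
  q₁ ≠ q₂ ∧ ∀ u ∈ M.I q₁, ∀ v ∈ M.I q₂, u.reverse < v.reverse

/-- A set of states which is an antichain for the co-lex partial order. -/
def IsColexAntichain (M : PDFA α σ) (S : Set σ) : Prop :=
  ∀ q₁ ∈ S, ∀ q₂ ∈ S, q₁ ≠ q₂ → ¬ M.stateLt q₁ q₂ ∧ ¬ M.stateLt q₂ q₁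

/-- `width(M)`: the maximum cardinality of a co-lex antichain of states. -/
noncomputable def width (M : PDFA α σ) [Fintype σ] : ℕ :=
  sSup {n : ℕ | ∃ S : Finset σ, S.card = n ∧ M.IsColexAntichain ↑S}

/-- `V` is convex in `(Pref(L(M)), ⪯)`. -/
def ConvexIn (M : PDFA α σ) (V : Set (List α)) : Prop :=
  ∀ ⦃u v w : List α⦄, u ∈ V → w ∈ V → v ∈ M.prefLang →
    u.reverse ≤ v.reverse → v.reverse ≤ w.reverse → v ∈ V

/-- A set of words `V` is entangled in `M` if some monotone sequence of elements of `V`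
passes through each state occurring in `V` infinitely many times. -/
def EntangledWords (M : PDFA α σ) (V : Set (List α)) : Prop :=
  ∃ x : ℕ → List α, (∀ i, x i ∈ V) ∧ MonotoneColex x ∧
    ∀ q : σ, (∃ w ∈ V, M.eval w = some q) →
      ∀ n : ℕ, ∃ i : ℕ, n ≤ i ∧ M.eval (x i) = some q

/-- An entangled convex (e.c.) decomposition of `M`: a partition of `Pref(L(M))` into
convex, entangled sets. -/
def IsECD (M : PDFA α σ) (V : Set (Set (List α))) : Prop :=
  (⋃₀ V) = M.prefLang ∧ V.Pairwise Disjoint ∧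
    ∀ W ∈ V, M.ConvexIn W ∧ M.EntangledWords W

/-- A minimum-size e.c. decomposition: a finite e.c. decomposition of minimum cardinality. -/
def IsMinECD (M : PDFA α σ) (V : Set (Set (List α))) : Prop :=
  V.Finite ∧ M.IsECD V ∧
    ∀ V' : Set (Set (List α)), V'.Finite → M.IsECD V' → V.ncard ≤ V'.ncard

/-- The equivalence relation `∼_𝒱`: two words are equivalent iff they reach the same state
and every element of `𝒱` lying strictly co-lexicographically between them intersects `I_q`. -/
def simV (M : PDFA α σ) (V : Set (Set (List α))) (u v : List α) : Prop :=
  M.eval u = M.eval v ∧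
  ∀ W ∈ V,
    (∀ w ∈ W, min u.reverse v.reverse < w.reverse ∧ w.reverse < max u.reverse v.reverse) →
    ∃ w ∈ W, M.eval w = M.eval u

/-- The decomposition-free characterization of `∼`: the two words reach the same state and
the co-lex interval between them is covered by finitely many convex sets, each entangled in
`M` and intersecting `I_q`. -/
def simR (M : PDFA α σ) (u v : List α) : Prop :=
  M.eval u = M.eval v ∧
  ∃ (n : ℕ) (C : Fin n → Set (List α)),
    (∀ i, C i ⊆ M.prefLang ∧ M.ConvexIn (C i) ∧ M.EntangledWords (C i) ∧
      ∃ w ∈ C i, M.eval w = M.eval u) ∧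
    ∀ w ∈ M.prefLang,
      min u.reverse v.reverse ≤ w.reverse → w.reverse ≤ max u.reverse v.reverse →
      w ∈ ⋃ i, C i

end PDFA

/- ============ auxiliary development ============ -/

namespace PDFA

variable {α : Type*} {σ : Type*} [LinearOrder α]

theorem evalFrom_append (M : PDFA α σ) (q : σ) (u v : List α) :
    M.evalFrom q (u ++ v) = (M.evalFrom q u).bind fun p => M.evalFrom p v := by
  induction u generalizing q with
  | nil => simp [evalFrom]
  | cons a u ih =>
    simp only [List.cons_append, evalFrom]
    cases h : M.step q a with
    | none => simp
    | some p => simp [ih]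

theorem eval_append (M : PDFA α σ) (u v : List α) :
    M.eval (u ++ v) = (M.eval u).bind fun p => M.evalFrom p v :=
  M.evalFrom_append M.start u v

theorem eval_snoc (M : PDFA α σ) (u : List α) (a : α) :
    M.eval (u ++ [a]) = (M.eval u).bind fun p => M.step p a := by
  rw [eval_append]
  rcases M.eval u with _ | p
  · rfl
  · show M.evalFrom p [a] = M.step p a
    rcases h : M.step p a with _ | p' <;> simp [evalFrom, h]

theorem prefLang_of_append {M : PDFA α σ} {u v : List α} (h : u ++ v ∈ M.prefLang) :
    u ∈ M.prefLang := by
  obtain ⟨z, hz⟩ := h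
  exact ⟨v ++ z, by rwa [← List.append_assoc]⟩

theorem mem_prefLang_of_mem_language {M : PDFA α σ} {w : List α} (h : w ∈ M.language) :
    w ∈ M.prefLang := ⟨[], by simpa using h⟩

theorem eval_isSome_of_prefLang {M : PDFA α σ} {w : List α} (h : w ∈ M.prefLang) :
    ∃ q, M.eval w = some q := by
  obtain ⟨v, q, hq, _⟩ := h
  rw [eval_append] at hq
  rcases he : M.eval w with _ | p
  · rw [he] at hq; exact absurd hq (by simp)
  · exact ⟨p, rfl⟩

theorem prefLang_congr {M : PDFA α σ} {u v : List α} (he : M.eval u = M.eval v)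
    (h : u ∈ M.prefLang) : v ∈ M.prefLang := by
  obtain ⟨z, q, hq, hacc⟩ := h
  refine ⟨z, q, ?_, hacc⟩
  rw [eval_append] at hq ⊢
  rwa [← he]

/-- The basic one-step relation: same state, and both in a common convex entangled set. -/
def Rel0 (M : PDFA α σ) (u v : List α) : Prop :=
  u ∈ M.prefLang ∧ v ∈ M.prefLang ∧ M.eval u = M.eval v ∧
  ∃ E : Set (List α), E ⊆ M.prefLang ∧ M.ConvexIn E ∧ M.EntangledWords E ∧ u ∈ E ∧ v ∈ E

theorem Rel0.symm {M : PDFA α σ} {u v : List α} (h : M.Rel0 u v) : M.Rel0 v u := by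
  obtain ⟨h1, h2, h3, E, hE1, hE2, hE3, hE4, hE5⟩ := h
  exact ⟨h2, h1, h3.symm, E, hE1, hE2, hE3, hE5, hE4⟩

/-- The word equivalence whose classes are the states of the new automaton. -/
def Sim (M : PDFA α σ) : List α → List α → Prop := Relation.ReflTransGen M.Rel0

theorem Sim.refl {M : PDFA α σ} (u : List α) : M.Sim u u := Relation.ReflTransGen.refl

theorem Sim.trans {M : PDFA α σ} {u v w : List α} (h : M.Sim u v) (h' : M.Sim v w) :
    M.Sim u w := Relation.ReflTransGen.trans h h'

theorem Sim.symm {M : PDFA α σ} {u v : List α} (h : M.Sim u v) : M.Sim v u :=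
  (@Relation.ReflTransGen.stdSymm _ M.Rel0 ⟨fun _ _ hr => hr.symm⟩).symm _ _ h

theorem Sim.single {M : PDFA α σ} {u v : List α} (h : M.Rel0 u v) : M.Sim u v :=
  Relation.ReflTransGen.single h

theorem Sim.eval_eq {M : PDFA α σ} {u v : List α} (h : M.Sim u v) :
    M.eval u = M.eval v := by
  induction h with
  | refl => rfl
  | tail _ hr ih => exact ih.trans hr.2.2.1

theorem Sim.mem_prefLang {M : PDFA α σ} {u v : List α} (h : M.Sim u v)
    (hu : u ∈ M.prefLang) : v ∈ M.prefLang := by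
  induction h with
  | refl => exact hu
  | tail _ hr _ => exact hr.2.1

theorem singleton_entangled (M : PDFA α σ) (w : List α) :
    M.EntangledWords {w} := by
  refine ⟨fun _ => w, fun _ => rfl, Or.inl fun _ _ _ => le_refl _, ?_⟩
  rintro q ⟨w', rfl, hw'⟩ n
  exact ⟨n, le_refl n, hw'⟩

theorem singleton_convex (M : PDFA α σ) (w : List α) : M.ConvexIn {w} := by
  intro u v w' hu hw' _ h1 h2
  rw [Set.mem_singleton_iff] at hu hw'; subst hu; subst hw'
  exact List.reverse_injective (le_antisymm h2 h1)

theorem rel0_self {M : PDFA α σ} {w : List α} (h : w ∈ M.prefLang) : M.Rel0 w w :=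
  ⟨h, h, rfl, {w}, by simpa using h, M.singleton_convex w, M.singleton_entangled w, rfl, rfl⟩

end PDFA

namespace Colex

variable {α : Type*} [LinearOrder α]

set_option linter.unusedSectionVars false

theorem cons_lt_cons_iff {a b : α} {l l' : List α} :
    (a :: l) < (b :: l') ↔ a < b ∨ (a = b ∧ l < l') := by
  show List.Lex _ _ _ ↔ _
  constructor
  · intro h
    cases h with
    | rel h => exact Or.inl h
    | cons h => exact Or.inr ⟨rfl, h⟩
  · rintro (h | ⟨rfl, h⟩)
    · exact List.Lex.rel h
    · exact List.Lex.cons h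

theorem nil_not_cons_le {a : α} {l : List α} : ¬ (a :: l ≤ []) := fun h =>
  absurd (List.nil_lt_cons a l) (not_lt.mpr h)

theorem cons_le_cons_iff {a : α} {l l' : List α} : (a :: l) ≤ (a :: l') ↔ l ≤ l' := by
  rw [← not_lt, ← not_lt, cons_lt_cons_iff]
  simp

theorem sandwich {a : α} {x y m : List α} (h1 : a :: x ≤ m) (h2 : m ≤ a :: y) :
    ∃ m', m = a :: m' ∧ x ≤ m' ∧ m' ≤ y := by
  cases m with
  | nil => exact absurd h1 nil_not_cons_le
  | cons b m' =>
    have hba : b = a := by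
      have h1' := not_lt.mpr h1
      have h2' := not_lt.mpr h2
      rw [cons_lt_cons_iff] at h1' h2'
      push_neg at h1' h2'
      exact le_antisymm (h2'.1) (h1'.1)
    subst hba
    exact ⟨m', rfl, cons_le_cons_iff.mp h1, cons_le_cons_iff.mp h2⟩

theorem reverse_snoc (u : List α) (a : α) : (u ++ [a]).reverse = a :: u.reverse := by
  simp

theorem snoc_le_snoc {u v : List α} (a : α) (h : u.reverse ≤ v.reverse) :
    (u ++ [a]).reverse ≤ (v ++ [a]).reverse := by
  rw [reverse_snoc, reverse_snoc, cons_le_cons_iff]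
  exact h

theorem snoc_sandwich {u v m : List α} {a : α} (h1 : (u ++ [a]).reverse ≤ m.reverse)
    (h2 : m.reverse ≤ (v ++ [a]).reverse) :
    ∃ m', m = m' ++ [a] ∧ u.reverse ≤ m'.reverse ∧ m'.reverse ≤ v.reverse := by
  rw [reverse_snoc] at h1 h2
  obtain ⟨m'', hm, hx, hy⟩ := sandwich h1 h2
  refine ⟨m''.reverse, ?_, by simpa using hx, by simpa using hy⟩
  have : m.reverse.reverse = (a :: m'').reverse := by rw [hm]
  simpa using this

end Colex

namespace PDFA

variable {α : Type*} {σ : Type*} [LinearOrder α]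

open Colex

/-- `v` lies (co-lexicographically) between `u` and `w`, in either orientation. -/
def Between (v u w : List α) : Prop :=
  (u.reverse ≤ v.reverse ∧ v.reverse ≤ w.reverse) ∨
  (w.reverse ≤ v.reverse ∧ v.reverse ≤ u.reverse)

theorem Between.eq {v u : List α} (h : Between v u u) : v = u := by
  rcases h with ⟨h1, h2⟩ | ⟨h1, h2⟩ <;>
  exact List.reverse_injective (le_antisymm h2 h1)

theorem between_self (u w : List α) : Between u u w := by
  rcases le_total u.reverse w.reverse with h | h
  · exact Or.inl ⟨le_refl _, h⟩
  · exact Or.inr ⟨h, le_refl _⟩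

theorem between_shift {v a c w : List α} (hb : Between v a w) (hnc : ¬ Between v c w) :
    Between v a c := by
  unfold Between at *
  push_neg at hnc
  rcases hb with ⟨h1, h2⟩ | ⟨h1, h2⟩
  · exact Or.inl ⟨h1, le_of_not_ge fun hc => absurd h2 (not_le.mpr (hnc.1 hc))⟩
  · exact Or.inr ⟨(hnc.2 h1).le, h2⟩

variable {M : PDFA α σ}

set_option linter.unusedSectionVars false

/-- Convexity of `Sim`-classes: anything of the same state between `Sim`-related words is
related to them. -/
theorem Sim.of_between {u w v : List α} (h : M.Sim u w) (hv : v ∈ M.prefLang)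
    (he : M.eval v = M.eval u) (hb : Between v u w) : M.Sim u v := by
  induction h using Relation.ReflTransGen.head_induction_on with
  | refl =>
    obtain rfl := hb.eq
    exact Sim.refl _
  | head h' hcw ih =>
    rename_i a c
    by_cases hc : Between v c w
    · exact (Sim.single h').trans (ih (he.trans h'.2.2.1) hc)
    · obtain ⟨haP, hcP, hac, E, hEP, hEc, hEe, haE, hcE⟩ := h'
      have hvE : v ∈ E := by
        rcases between_shift hb hc with ⟨h1, h2⟩ | ⟨h1, h2⟩
        · exact hEc haE hcE hv h1 h2
        · exact hEc hcE haE hv h1 h2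
      exact Sim.single ⟨haP, hv, he.symm, E, hEP, hEc, hEe, haE, hvE⟩

/-- Covering: anything between `Sim`-related words lies in a convex entangled set that
meets the class. -/
theorem Sim.cover {u w v : List α} (h : M.Sim u w) (hv : v ∈ M.prefLang)
    (hb : Between v u w) :
    ∃ E : Set (List α), E ⊆ M.prefLang ∧ M.ConvexIn E ∧ M.EntangledWords E ∧ v ∈ E ∧
      ∃ y ∈ E, M.Sim u y := by
  induction h using Relation.ReflTransGen.head_induction_on with
  | refl =>
    obtain rfl := hb.eq
    exact ⟨{v}, Set.singleton_subset_iff.mpr hv, M.singleton_convex v,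
      M.singleton_entangled v, rfl, v, rfl, Sim.refl v⟩
  | head h' hcw ih =>
    rename_i a c
    by_cases hc : Between v c w
    · obtain ⟨E, h1, h2, h3, h4, y, hy, hcy⟩ := ih hc
      exact ⟨E, h1, h2, h3, h4, y, hy, (Sim.single h').trans hcy⟩
    · obtain ⟨haP, hcP, hac, E, hEP, hEc, hEe, haE, hcE⟩ := h'
      have hvE : v ∈ E := by
        rcases between_shift hb hc with ⟨h1, h2⟩ | ⟨h1, h2⟩
        · exact hEc haE hcE hv h1 h2
        · exact hEc hcE haE hv h1 h2
      exact ⟨E, hEP, hEc, hEe, hvE, a, haE, Sim.refl a⟩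

/-- Straddling: if a class has points on both sides of a lower set, some convex entangled
set meeting the class has points on both sides. -/
theorem Sim.straddle {u w : List α} {γ : Set (List α)} (h : M.Sim u w) (hu : u ∈ γ)
    (hw : w ∉ γ) :
    ∃ E : Set (List α), E ⊆ M.prefLang ∧ M.ConvexIn E ∧ M.EntangledWords E ∧
      (∃ a' ∈ E, a' ∈ γ) ∧ (∃ b' ∈ E, b' ∉ γ) ∧ ∃ y ∈ E, M.Sim u y := by
  induction h using Relation.ReflTransGen.head_induction_on with
  | refl => exact absurd hu hw
  | head h' hcw ih =>
    rename_i a c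
    by_cases hc : c ∈ γ
    · obtain ⟨E, h1, h2, h3, h4, h5, y, hy, hcy⟩ := ih hc
      exact ⟨E, h1, h2, h3, h4, h5, y, hy, (Sim.single h').trans hcy⟩
    · obtain ⟨haP, hcP, hac, E, hEP, hEc, hEe, haE, hcE⟩ := h'
      exact ⟨E, hEP, hEc, hEe, ⟨a, haE, hu⟩, ⟨c, hcE, hc⟩, a, haE, Sim.refl a⟩


theorem snoc_convex {E : Set (List α)} (hconv : M.ConvexIn E) (a : α) :
    M.ConvexIn ({w | ∃ z ∈ E, w = z ++ [a]} ∩ M.prefLang) := by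
  rintro u v w ⟨⟨z₁, hz₁, rfl⟩, -⟩ ⟨⟨z₂, hz₂, rfl⟩, -⟩ hv h1 h2
  obtain ⟨m', rfl, hm1, hm2⟩ := snoc_sandwich h1 h2
  exact ⟨⟨m', hconv hz₁ hz₂ (prefLang_of_append hv) hm1 hm2, rfl⟩, hv⟩

theorem snoc_entangled {E : Set (List α)} (hEP : E ⊆ M.prefLang)
    (hent : M.EntangledWords E) (a : α) {z₀ : List α} (hz₀ : z₀ ∈ E)
    (h0 : z₀ ++ [a] ∈ M.prefLang) :
    M.EntangledWords ({w | ∃ z ∈ E, w = z ++ [a]} ∩ M.prefLang) := by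
  classical
  obtain ⟨x, hxE, hxm, hxh⟩ := hent
  obtain ⟨p₀, hp₀⟩ := eval_isSome_of_prefLang (hEP hz₀)
  set J : ℕ → Prop := fun i => x i ++ [a] ∈ M.prefLang with hJ
  have keystep : ∀ z, z ∈ E → (M.eval z).isSome → ∀ i, M.eval (x i) = M.eval z →
      M.eval (x i ++ [a]) = M.eval (z ++ [a]) := by
    intro z hz _ i hi
    rw [eval_snoc, eval_snoc, hi]
  have hJd : ∀ n, ∃ i, n ≤ i ∧ J i := by
    intro n
    obtain ⟨i, hi, hev⟩ := hxh p₀ ⟨z₀, hz₀, hp₀⟩ n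
    refine ⟨i, hi, ?_⟩
    have : M.eval (x i ++ [a]) = M.eval (z₀ ++ [a]) := by
      rw [eval_snoc, eval_snoc, hev, hp₀]
    exact prefLang_congr this.symm h0
  have Jinf : {i | J i}.Infinite := by
    by_contra hfin
    rw [Set.not_infinite] at hfin
    obtain ⟨b, hb⟩ := hfin.bddAbove
    obtain ⟨i, hi, hJi⟩ := hJd (b + 1)
    exact absurd (hb hJi) (by omega)
  have hφm := Nat.nth_strictMono Jinf
  refine ⟨fun n => x (Nat.nth J n) ++ [a], ?_, ?_, ?_⟩
  · intro i
    exact ⟨⟨x (Nat.nth J i), hxE _, rfl⟩, Nat.nth_mem_of_infinite Jinf i⟩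
  · rcases hxm with hm | hm
    · exact Or.inl fun i j hij => snoc_le_snoc a (hm _ _ (hφm.monotone hij))
    · exact Or.inr fun i j hij => snoc_le_snoc a (hm _ _ (hφm.monotone hij))
  · rintro q ⟨w, ⟨⟨z, hz, rfl⟩, hwP⟩, hq⟩ n
    obtain ⟨p, hp⟩ := eval_isSome_of_prefLang (hEP hz)
    obtain ⟨k, hk, hevk⟩ := hxh p ⟨z, hz, hp⟩ (Nat.nth J n)
    have hkq : M.eval (x k ++ [a]) = some q := by
      rw [eval_snoc, hevk, ← hp, ← eval_snoc, hq]
    have hkJ : J k := prefLang_congr (hkq.trans hq.symm).symm hwP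
    refine ⟨Nat.count J k, ?_, ?_⟩
    · have : Nat.nth J n ≤ Nat.nth J (Nat.count J k) := by
        rw [Nat.nth_count hkJ]; exact hk
      exact (hφm.le_iff_le).mp this
    · show M.eval (x (Nat.nth J (Nat.count J k)) ++ [a]) = some q
      rw [Nat.nth_count hkJ]; exact hkq

theorem Sim.snoc {u v : List α} (h : M.Sim u v) (a : α) (hu : u ++ [a] ∈ M.prefLang) :
    v ++ [a] ∈ M.prefLang ∧ M.Sim (u ++ [a]) (v ++ [a]) := by
  induction h using Relation.ReflTransGen.head_induction_on with
  | refl => exact ⟨hu, Sim.refl _⟩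
  | head h' hcv ih =>
    rename_i a' c
    obtain ⟨haP, hcP, hac, E, hEP, hEc, hEe, haE, hcE⟩ := h'
    have hev : M.eval (a' ++ [a]) = M.eval (c ++ [a]) := by
      rw [eval_snoc, eval_snoc, hac]
    have hc' : c ++ [a] ∈ M.prefLang := prefLang_congr hev hu
    obtain ⟨hv', hsim⟩ := ih hc'
    refine ⟨hv', Sim.trans (Sim.single ?_) hsim⟩
    exact ⟨hu, hc', hev, {w | ∃ z ∈ E, w = z ++ [a]} ∩ M.prefLang,
      Set.inter_subset_right, snoc_convex hEc a, snoc_entangled hEP hEe a haE hu,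
      ⟨⟨a', haE, rfl⟩, hu⟩, ⟨⟨c, hcE, rfl⟩, hc'⟩⟩


section Window

variable [Fintype σ]

/-- The window lemma: a strictly monotone sequence of words reaching the same state has
two (distinct) terms related by `Rel0`.  Parametrized by the direction `le'`. -/
theorem window_lemma (M : PDFA α σ) (le' : List α → List α → Prop)
    (htot : ∀ x y, le' x y ∨ le' y x)
    (htrans : ∀ {x y z}, le' x y → le' y z → le' x z)
    (hanti : ∀ {x y}, le' x y → le' y x → x = y)
    (hmon : ∀ x : ℕ → List α, (∀ i j, i ≤ j → le' (x i) (x j)) → MonotoneColex x)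
    (hconv : ∀ E : Set (List α),
      (∀ x y z, x ∈ E → y ∈ E → z ∈ M.prefLang → le' x z → le' z y → z ∈ E) → M.ConvexIn E)
    (q : σ) (u : ℕ → List α) (hu : ∀ i, u i ∈ M.I q)
    (hlt : ∀ i j, i < j → le' (u i) (u j) ∧ u i ≠ u j) :
    ∃ i j, i ≠ j ∧ M.Rel0 (u i) (u j) := by
  classical
  have hrefl : ∀ x, le' x x := fun x => (htot x x).elim id id
  set A : Set σ := {r : σ | ∀ i : ℕ, ∃ w,
    (w ∈ M.I r ∧ (le' (u i) w ∧ u i ≠ w)) ∧ ∃ j, le' w (u j) ∧ w ≠ u j} with hA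
  have hqA : q ∈ A := by
    intro i
    refine ⟨u (i+1), ⟨hu (i+1), (hlt i (i+1) (by omega)).1, (hlt i (i+1) (by omega)).2⟩,
      i+2, (hlt (i+1) (i+2) (by omega)).1, (hlt (i+1) (i+2) (by omega)).2⟩
  have hAchoice : ∀ r : σ, ∃ i : ℕ, r ∈ A ∨ ∀ w, ¬((w ∈ M.I r ∧ (le' (u i) w ∧ u i ≠ w)) ∧
      ∃ j, le' w (u j) ∧ w ≠ u j) := by
    intro r
    by_cases h : r ∈ A
    · exact ⟨0, Or.inl h⟩
    · obtain ⟨i, hi⟩ := not_forall.mp h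
      exact ⟨i, Or.inr (not_exists.mp hi)⟩
  set g : σ → ℕ := fun r => (hAchoice r).choose with hgdef
  set i0 : ℕ := Finset.univ.sup g with hi0
  have hgle : ∀ r, g r ≤ i0 := fun r => Finset.le_sup (Finset.mem_univ r)
  have hle_i0 : ∀ r, le' (u (g r)) (u i0) := by
    intro r
    rcases eq_or_lt_of_le (hgle r) with h | h
    · rw [h]; exact hrefl _
    · exact (hlt _ _ h).1
  set V : Set (List α) := {w | w ∈ M.prefLang ∧ (le' (u i0) w ∧ u i0 ≠ w) ∧
    ∃ j, le' w (u j)} with hV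
  have memV : ∀ k, i0 < k → u k ∈ V :=
    fun k hk => ⟨(hu k).1, ⟨(hlt i0 k hk).1, (hlt i0 k hk).2⟩, k, hrefl _⟩
  -- every state occurring in V is in A
  have hVstate : ∀ w ∈ V, ∀ r, M.eval w = some r → r ∈ A := by
    intro w hw r hev
    by_contra hr
    rcases (hAchoice r).choose_spec with h | hno
    · exact hr h
    obtain ⟨hwP, ⟨hle0, hne0⟩, j, hj⟩ := hw
    refine hno w ⟨⟨⟨hwP, hev⟩, htrans (hle_i0 r) hle0, ?_⟩, j+1,
      htrans hj (hlt j (j+1) (by omega)).1, ?_⟩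
    · intro heq
      have h1 : le' (u i0) (u (g r)) := heq.symm ▸ hle0
      have h2 : u (g r) = u i0 := hanti (hle_i0 r) h1
      rcases eq_or_lt_of_le (hgle r) with h | h
      · refine hne0 ?_
        rw [← h]
        exact heq
      · exact (hlt _ _ h).2 h2
    · intro heq
      have h1 : le' (u (j+1)) (u j) := heq ▸ hj
      exact (hlt j (j+1) (by omega)).2 (hanti (hlt j (j+1) (by omega)).1 h1)
  have hVP : V ⊆ M.prefLang := fun w hw => hw.1
  have hVconv : M.ConvexIn V := by
    refine hconv V ?_
    rintro x y z ⟨hxP, ⟨hx0, hxne⟩, jx, hjx⟩ ⟨hyP, hy0, jy, hjy⟩ hzP h1 h2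
    refine ⟨hzP, ⟨htrans hx0 h1, ?_⟩, jy, htrans h2 hjy⟩
    intro heq
    exact hxne (hanti hx0 (heq ▸ h1))
  -- the cyclic diagonal sequence
  have hAfin : A.Finite := Set.toFinite A
  set L : List σ := hAfin.toFinset.toList with hL
  have hmemL : ∀ r, r ∈ A ↔ r ∈ L := by
    intro r; rw [hL, Finset.mem_toList, Set.Finite.mem_toFinset]
  have hlen : 0 < L.length := by
    rcases List.eq_nil_or_concat L with h | ⟨_, _, h⟩
    · exact absurd ((hmemL q).mp hqA) (by rw [h]; simp)
    · rw [h]; simp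
  have hnext : ∀ w, (∃ j, le' w (u j)) → ∀ r ∈ A, ∃ w',
      (w' ∈ M.I r ∧ (le' w w' ∧ w ≠ w')) ∧ ∃ j', le' w' (u j') := by
    rintro w ⟨j, hj⟩ r hr
    obtain ⟨w', ⟨hIr, hslt, hsne⟩, j', hsltj, _⟩ := hr j
    refine ⟨w', ⟨hIr, htrans hj hslt, ?_⟩, j', hsltj⟩
    intro heq
    exact hsne (hanti hslt (heq ▸ hj))
  have hstep : ∀ (n : ℕ) (w : List α), w ∈ V → ∃ w', w' ∈ V ∧ (le' w w' ∧ w ≠ w') ∧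
      M.eval w' = some (L.get ⟨n % L.length, Nat.mod_lt n hlen⟩) := by
    intro n w hw
    set r := L.get ⟨n % L.length, Nat.mod_lt n hlen⟩ with hr
    have hrA : r ∈ A := (hmemL r).mpr (List.get_mem _ _)
    obtain ⟨w', ⟨hIr, hle, hne⟩, j', hj'⟩ := hnext w hw.2.2 r hrA
    refine ⟨w', ⟨hIr.1, ⟨htrans hw.2.1.1 hle, ?_⟩, j', hj'⟩, ⟨hle, hne⟩, hIr.2⟩
    intro heq
    exact hw.2.1.2 (hanti hw.2.1.1 (heq ▸ hle))
  choose fstep hfstep1 hfstep2 hfstep3 using fun n (w : {w : List α // w ∈ V}) =>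
    hstep n w.val w.property
  set F : ℕ → {w : List α // w ∈ V} := fun n =>
    Nat.rec ⟨u (i0+1), memV _ (by omega)⟩ (fun n prev => ⟨fstep n prev, hfstep1 n prev⟩) n
    with hF
  have hFstep : ∀ n, (le' (F n).val (F (n+1)).val ∧ (F n).val ≠ (F (n+1)).val) ∧
      M.eval (F (n+1)).val = some (L.get ⟨n % L.length, Nat.mod_lt n hlen⟩) :=
    fun n => ⟨hfstep2 n (F n), hfstep3 n (F n)⟩
  have hFmono : ∀ i j, i ≤ j → le' (F i).val (F j).val := by
    intro i j hij
    induction j with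
    | zero => cases Nat.le_zero.mp hij; exact hrefl _
    | succ j ih =>
      rcases Nat.lt_or_ge i (j+1) with h | h
      · exact htrans (ih (by omega)) (hFstep j).1.1
      · have : i = j + 1 := by omega
        rw [this]; exact hrefl _
  have hVent : M.EntangledWords V := by
    refine ⟨fun n => (F n).val, fun n => (F n).property, hmon _ hFmono, ?_⟩
    rintro r ⟨w, hwV, hwr⟩ n
    have hrA : r ∈ A := hVstate w hwV r hwr
    obtain ⟨k, rfl⟩ := List.mem_iff_get.mp ((hmemL r).mp hrA)
    refine ⟨n * L.length + (k : ℕ) + 1, ?_, ?_⟩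
    · have : n ≤ n * L.length := Nat.le_mul_of_pos_right n hlen
      omega
    · have h2 := (hFstep (n * L.length + (k : ℕ))).2
      have hmod : (n * L.length + (k : ℕ)) % L.length = (k : ℕ) := by
        rw [Nat.mul_comm, Nat.mul_add_mod]
        exact Nat.mod_eq_of_lt k.isLt
      rw [h2]
      exact congrArg (fun i : Fin L.length => some (L.get i)) (Fin.ext hmod)
  refine ⟨i0+1, i0+2, by omega, (hu (i0+1)).1, (hu (i0+2)).1, ?_, V, hVP, hVconv, hVent,
    memV _ (by omega), memV _ (by omega)⟩
  rw [(hu (i0+1)).2, (hu (i0+2)).2]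

end Window


/-- Any infinite subset of a linear order contains a strictly ascending or strictly
descending ω-chain. -/
theorem infinite_monotone_chain {β : Type*} [LinearOrder β] {S : Set β} (hS : S.Infinite) :
    ∃ u : ℕ → β, (∀ n, u n ∈ S) ∧ ((∀ n, u n < u (n+1)) ∨ (∀ n, u (n+1) < u n)) := by
  classical
  by_cases hD : {x | x ∈ S ∧ {y | y ∈ S ∧ x < y}.Finite}.Infinite
  · -- build a descending chain inside D
    set D := {x | x ∈ S ∧ {y | y ∈ S ∧ x < y}.Finite} with hDdef
    have hstep : ∀ x : {x // x ∈ D}, ∃ x' : {x // x ∈ D}, x'.val < x.val := by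
      rintro ⟨x, hxS, hxF⟩
      have hinf : (D \ insert x {y | y ∈ S ∧ x < y}).Infinite :=
        hD.diff (hxF.insert x)
      obtain ⟨x', hx'D, hx'notin⟩ := hinf.nonempty
      refine ⟨⟨x', hx'D⟩, ?_⟩
      rcases lt_trichotomy x' x with h | h | h
      · exact h
      · exact absurd (by rw [h]; exact Set.mem_insert x _) hx'notin
      · have hmem : x' ∈ {y | y ∈ S ∧ x < y} := ⟨hx'D.1, h⟩
        exact absurd (Set.mem_insert_of_mem _ hmem) hx'notin
    choose f hf using hstep
    obtain ⟨d0, hd0⟩ := hD.nonempty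
    set u : ℕ → {x // x ∈ D} := fun n => Nat.rec ⟨d0, hd0⟩ (fun _ prev => f prev) n with hu
    exact ⟨fun n => (u n).val, fun n => (u n).property.1, Or.inr fun n => hf (u n)⟩
  · rw [Set.not_infinite] at hD
    set T := {x : β | x ∈ S ∧ {y | y ∈ S ∧ x < y}.Infinite} with hT
    have hstep : ∀ x : {x // x ∈ T}, ∃ x' : {x // x ∈ T}, x.val < x'.val := by
      rintro ⟨x, hxS, hxI⟩
      have hinf : ({y | y ∈ S ∧ x < y} \ {x | x ∈ S ∧ {y | y ∈ S ∧ x < y}.Finite}).Infinite :=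
        hxI.diff hD
      obtain ⟨y, hymem, hynotin⟩ := hinf.nonempty
      refine ⟨⟨y, hymem.1, ?_⟩, hymem.2⟩
      by_contra hfin
      rw [Set.not_infinite] at hfin
      exact hynotin ⟨hymem.1, hfin⟩
    have hTne : T.Nonempty := by
      obtain ⟨x, hxS, hxD⟩ := (hS.diff hD).nonempty
      refine ⟨x, hxS, ?_⟩
      by_contra hfin
      rw [Set.not_infinite] at hfin
      exact hxD ⟨hxS, hfin⟩
    obtain ⟨t0, ht0⟩ := hTne
    choose f hf using hstep
    set u : ℕ → {x // x ∈ T} := fun n => Nat.rec ⟨t0, ht0⟩ (fun _ prev => f prev) n with hu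
    exact ⟨fun n => (u n).val, fun n => (u n).property.1, Or.inl fun n => hf (u n)⟩

end PDFA

namespace PDFA

variable {α : Type*} {σ : Type*} [LinearOrder α] {M : PDFA α σ}

set_option linter.unusedSectionVars false

variable (M) in
/-- The setoid of `Sim` on words of `Pref(L(M))`. -/
def simSetoid : Setoid {w : List α // w ∈ M.prefLang} :=
  ⟨fun s t => M.Sim s.val t.val,
   fun s => Sim.refl s.val, Sim.symm, Sim.trans⟩

variable (M) in
/-- The states of the new automaton: `Sim`-classes of words of `Pref(L(M))`. -/
def ClassT := Quotient (simSetoid M)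

variable (M) in
noncomputable def stc : ClassT M → Option σ :=
  Quotient.lift (fun w => M.eval w.val) (fun _ _ h => Sim.eval_eq h)

theorem finite_classT [Fintype σ] : Finite (ClassT M) := by
  classical
  by_contra hfin
  rw [not_finite_iff_infinite] at hfin
  obtain ⟨o, hofib⟩ := Finite.exists_infinite_fiber (stc M)
  have hfibS : {c : ClassT M | stc M c = o}.Infinite := by
    rw [Set.infinite_coe_iff] at hofib
    exact hofib
  -- words: one representative per class in the fiber
  set wd : ClassT M → List α := fun c => (Quotient.out c).val with hwd
  have hwdP : ∀ c, wd c ∈ M.prefLang := fun c => (Quotient.out c).property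
  have hwdev : ∀ c, M.eval (wd c) = stc M c := by
    intro c
    conv_rhs => rw [← Quotient.out_eq c]
    rfl
  have hwdinj : ∀ c c', M.Sim (wd c) (wd c') → c = c' := by
    intro c c' h
    rw [← Quotient.out_eq c, ← Quotient.out_eq c']
    exact Quotient.sound h
  set W : Set (List α) := wd '' {c | stc M c = o} with hW
  have hWinf : W.Infinite := by
    refine Set.Infinite.image ?_ hfibS
    intro c hc c' hc' h
    exact hwdinj c c' (h ▸ Sim.refl _)
  have hWP : ∀ w ∈ W, w ∈ M.prefLang := by rintro w ⟨c, _, rfl⟩; exact hwdP c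
  have hWev : ∀ w ∈ W, M.eval w = o := by rintro w ⟨c, hc, rfl⟩; rw [hwdev]; exact hc
  have hWnosim : ∀ w ∈ W, ∀ w' ∈ W, w ≠ w' → ¬ M.Sim w w' := by
    rintro w ⟨c, _, rfl⟩ w' ⟨c', _, rfl⟩ hne hsim
    exact hne (congrArg wd (hwdinj c c' hsim))
  -- a state q with o = some q
  obtain ⟨w₀, hw₀⟩ := hWinf.nonempty
  obtain ⟨q, hq⟩ := eval_isSome_of_prefLang (hWP w₀ hw₀)
  have ho : o = some q := (hWev w₀ hw₀).symm.trans hq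
  -- monotone chain in the reversed image
  have hrevinf : (List.reverse '' W).Infinite :=
    Set.Infinite.image (fun x _ y _ h => List.reverse_injective h) hWinf
  obtain ⟨v, hvmem, hvchain⟩ := infinite_monotone_chain hrevinf
  set u : ℕ → List α := fun n => (v n).reverse with hudef
  have hurev : ∀ n, (u n).reverse = v n := by
    intro n
    show (v n).reverse.reverse = v n
    rw [List.reverse_reverse]
  have huW : ∀ n, u n ∈ W := by
    intro n
    obtain ⟨w, hw, hwv⟩ := hvmem n
    have huw : u n = w := by
      show (v n).reverse = w
      rw [← hwv, List.reverse_reverse]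
    rw [huw]; exact hw
  have huI : ∀ n, u n ∈ M.I q := fun n => ⟨hWP _ (huW n), (hWev _ (huW n)).trans ho⟩
  rcases hvchain with hasc | hdesc
  · have hsm : StrictMono v := strictMono_nat_of_lt_succ hasc
    obtain ⟨i, j, hij, hrel⟩ := window_lemma M (fun x y => x.reverse ≤ y.reverse)
      (fun x y => le_total _ _) (fun h1 h2 => le_trans h1 h2)
      (fun h1 h2 => List.reverse_injective (le_antisymm h1 h2))
      (fun x h => Or.inl h)
      (fun E h => fun a b c ha hc hb h1 h2 => h a c b ha hc hb h1 h2)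
      q u huI
      (fun i j hij => by
        refine ⟨?_, fun he => ?_⟩
        · show (u i).reverse ≤ (u j).reverse
          rw [hurev, hurev]
          exact (hsm hij).le
        · exact (hsm hij).ne (by rw [← hurev, ← hurev, he]))
    exact hWnosim _ (huW i) _ (huW j)
      (fun he => hij (hsm.injective (by rw [← hurev, ← hurev, he])))
      (Sim.single hrel)
  · have hsm : StrictAnti v := strictAnti_nat_of_succ_lt hdesc
    obtain ⟨i, j, hij, hrel⟩ := window_lemma M (fun x y => y.reverse ≤ x.reverse)
      (fun x y => (le_total _ _).symm)
      (fun h1 h2 => le_trans h2 h1)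
      (fun h1 h2 => List.reverse_injective (le_antisymm h2 h1))
      (fun x h => Or.inr h)
      (fun E h => fun a b c ha hc hb h1 h2 => h c a b hc ha hb h2 h1)
      q u huI
      (fun i j hij => by
        refine ⟨?_, fun he => ?_⟩
        · show (u j).reverse ≤ (u i).reverse
          rw [hurev, hurev]
          exact (hsm hij).le
        · exact (hsm hij).ne' (by rw [← hurev, ← hurev, he]))
    exact hWnosim _ (huW i) _ (huW j)
      (fun he => hij (hsm.injective (by rw [← hurev, ← hurev, he])))
      (Sim.single hrel)


end PDFA

namespace PDFA

variable {α : Type*} {σ : Type*} [LinearOrder α] {M : PDFA α σ}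

set_option linter.unusedSectionVars false

variable (M) in
/-- The class of a word of `Pref(L(M))`. -/
def mkC (w : List α) (h : w ∈ M.prefLang) : ClassT M :=
  Quotient.mk (simSetoid M) ⟨w, h⟩

theorem mkC_eq_iff {w w' : List α} {h : w ∈ M.prefLang} {h' : w' ∈ M.prefLang} :
    mkC M w h = mkC M w' h' ↔ M.Sim w w' := by
  constructor
  · intro he
    exact Quotient.exact he
  · intro hsim
    exact Quotient.sound hsim

variable (M) in
open Classical in
/-- The quotient automaton. -/
noncomputable def QA (hε : [] ∈ M.prefLang) : PDFA α (ClassT M) where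
  step := fun c a => Quotient.lift
    (fun w : {w : List α // w ∈ M.prefLang} =>
      if h : w.val ++ [a] ∈ M.prefLang then some (mkC M (w.val ++ [a]) h) else none)
    (by
      intro s t hst
      by_cases hs : s.val ++ [a] ∈ M.prefLang
      · obtain ⟨ht, hsim⟩ := Sim.snoc hst a hs
        rw [dif_pos hs, dif_pos ht]
        exact congrArg some (mkC_eq_iff.mpr hsim)
      · have ht : ¬ (t.val ++ [a] ∈ M.prefLang) :=
          fun ht => hs (Sim.snoc (Sim.symm hst) a ht).1
        rw [dif_neg hs, dif_neg ht]) c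
  start := mkC M [] hε
  accept := {c | Quotient.lift (fun w : {w : List α // w ∈ M.prefLang} => w.val ∈ M.language)
    (by
      intro s t hst
      have he : M.eval s.val = M.eval t.val := Sim.eval_eq hst
      refine propext ⟨?_, ?_⟩ <;> rintro ⟨p, hp, hacc⟩
      · exact ⟨p, he ▸ hp, hacc⟩
      · exact ⟨p, he.symm ▸ hp, hacc⟩) c}

variable (M) in
open Classical in
theorem QA_step_mk (hε : [] ∈ M.prefLang) (w : List α) (hw : w ∈ M.prefLang) (a : α) :
    (QA M hε).step (mkC M w hw) a =
      if h : w ++ [a] ∈ M.prefLang then some (mkC M (w ++ [a]) h) else none := rfl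

variable (M) in
theorem QA_eval_mem (hε : [] ∈ M.prefLang) :
    ∀ (w : List α) (h : w ∈ M.prefLang), (QA M hε).eval w = some (mkC M w h) := by
  intro w
  induction w using List.reverseRecOn with
  | nil => intro h; rfl
  | append_singleton w a ih =>
    intro h
    have hw : w ∈ M.prefLang := prefLang_of_append h
    rw [eval_snoc, ih hw]
    show (QA M hε).step (mkC M w hw) a = _
    rw [QA_step_mk M hε w hw a, dif_pos h]

variable (M) in
theorem QA_eval_some (hε : [] ∈ M.prefLang) :
    ∀ (w : List α) (c : ClassT M), (QA M hε).eval w = some c → w ∈ M.prefLang := by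
  intro w
  induction w using List.reverseRecOn with
  | nil => intro c _; exact hε
  | append_singleton w a ih =>
    intro c hev
    rw [eval_snoc] at hev
    rcases he : (QA M hε).eval w with _ | c'
    · rw [he] at hev; exact absurd hev (by simp)
    · have hw : w ∈ M.prefLang := ih c' he
      rw [he] at hev
      rw [QA_eval_mem M hε w hw] at he
      have hc' : c' = mkC M w hw := by injection he.symm
      rw [hc'] at hev
      show w ++ [a] ∈ M.prefLang
      by_contra hnot
      have hstep : (QA M hε).step (mkC M w hw) a = none := by
        rw [QA_step_mk M hε w hw a, dif_neg hnot]
      have : ((some (mkC M w hw)).bind fun p => (QA M hε).step p a) = none := by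
        rw [Option.bind_some, hstep]
      rw [this] at hev
      exact absurd hev (by simp)

variable (M) in
theorem QA_accept_iff (hε : [] ∈ M.prefLang) {w : List α} (h : w ∈ M.prefLang) :
    mkC M w h ∈ (QA M hε).accept ↔ w ∈ M.language := Iff.rfl

variable (M) in
theorem QA_language (hε : [] ∈ M.prefLang) : (QA M hε).language = M.language := by
  ext w
  constructor
  · rintro ⟨c, hev, hacc⟩
    have hw : w ∈ M.prefLang := QA_eval_some M hε w c hev
    rw [QA_eval_mem M hε w hw] at hev
    have : c = mkC M w hw := by injection hev.symm
    rw [this] at hacc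
    exact (QA_accept_iff M hε hw).mp hacc
  · intro hL
    have hw : w ∈ M.prefLang := mem_prefLang_of_mem_language hL
    exact ⟨mkC M w hw, QA_eval_mem M hε w hw, (QA_accept_iff M hε hw).mpr hL⟩

variable (M) in
theorem QA_prefLang (hε : [] ∈ M.prefLang) : (QA M hε).prefLang = M.prefLang := by
  unfold prefLang
  rw [QA_language]

variable (M) in
theorem QA_trim (hε : [] ∈ M.prefLang) : (QA M hε).Trim := by
  constructor
  · intro c
    induction c using Quotient.ind with
    | _ s => exact ⟨s.val, QA_eval_mem M hε s.val s.property⟩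
  · intro c
    induction c using Quotient.ind with
    | _ s =>
      obtain ⟨ext, hext⟩ := s.property
      have hextP : s.val ++ ext ∈ M.prefLang := mem_prefLang_of_mem_language hext
      have h1 : (QA M hε).eval (s.val ++ ext) = some (mkC M _ hextP) :=
        QA_eval_mem M hε _ hextP
      rw [eval_append, QA_eval_mem M hε s.val s.property] at h1
      refine ⟨ext, mkC M _ hextP, h1, ?_⟩
      rw [QA_accept_iff M hε hextP]
      exact hext

variable (M) in
theorem QA_I (hε : [] ∈ M.prefLang) {w : List α} {c : ClassT M} :
    w ∈ (QA M hε).I c ↔ ∃ h : w ∈ M.prefLang, mkC M w h = c := by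
  constructor
  · rintro ⟨hP, hev⟩
    rw [QA_prefLang] at hP
    rw [QA_eval_mem M hε w hP] at hev
    exact ⟨hP, by injection hev⟩
  · rintro ⟨h, rfl⟩
    exact ⟨by rw [QA_prefLang]; exact h, QA_eval_mem M hε w h⟩


theorem cofinal_pigeonhole {γ : Type*} [Finite γ] (f : ℕ → γ) (P : ℕ → Prop)
    (h : ∀ n, ∃ i, n ≤ i ∧ P i) : ∃ c, ∀ n, ∃ i, n ≤ i ∧ P i ∧ f i = c := by
  classical
  by_contra hc
  push_neg at hc
  choose g hg using hc
  haveI := Fintype.ofFinite γ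
  set B := Finset.univ.sup g with hB
  obtain ⟨i, hi, hPi⟩ := h B
  have : g (f i) ≤ B := Finset.le_sup (Finset.mem_univ _)
  exact hg (f i) i (le_trans this hi) hPi rfl

end PDFA

namespace PDFA

variable {α : Type*} {σ : Type*} [LinearOrder α] {M : PDFA α σ}

set_option linter.unusedSectionVars false

/-- Any entangled set of states is a co-lex antichain. -/
theorem isColexAntichain_of_entangledStates {τ : Type*} {N : PDFA α τ} {S : Set τ}
    (h : N.EntangledStates S) : N.IsColexAntichain S := by
  obtain ⟨x, hxP, hxm, hxh⟩ := h
  have key : ∀ r₁ ∈ S, ∀ r₂ ∈ S, ¬ N.stateLt r₁ r₂ := by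
    rintro r₁ hr₁ r₂ hr₂ ⟨hne, hlt⟩
    rcases hxm with hm | hm
    · obtain ⟨i, -, hi⟩ := hxh r₂ hr₂ 0
      obtain ⟨j, hij, hj⟩ := hxh r₁ hr₁ i
      exact absurd (hm i j hij) (not_le.mpr (hlt (x j) ⟨hxP j, hj⟩ (x i) ⟨hxP i, hi⟩))
    · obtain ⟨i, -, hi⟩ := hxh r₁ hr₁ 0
      obtain ⟨j, hij, hj⟩ := hxh r₂ hr₂ i
      exact absurd (hm i j hij) (not_le.mpr (hlt (x i) ⟨hxP i, hi⟩ (x j) ⟨hxP j, hj⟩))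
  exact fun q₁ h₁ q₂ h₂ _ => ⟨key q₁ h₁ q₂ h₂, key q₂ h₂ q₁ h₁⟩

theorem stc_mkC {w : List α} (h : w ∈ M.prefLang) : stc M (mkC M w h) = M.eval w := rfl

variable (M) in
theorem entSet_transfer_up [Fintype σ] (hε : [] ∈ M.prefLang) {n : ℕ}
    (hS : ∃ S : Finset σ, S.card = n ∧ M.EntangledStates ↑S) :
    ∃ T : Finset (ClassT M), T.card = n ∧ (QA M hε).EntangledStates ↑T := by
  classical
  haveI : Finite (ClassT M) := finite_classT
  obtain ⟨S, hcard, x, hxP, hxm, hxh⟩ := hS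
  set f : ℕ → ClassT M := fun i => mkC M (x i) (hxP i) with hf
  have hfev : ∀ i, (QA M hε).eval (x i) = some (f i) := by
    intro i
    exact QA_eval_mem M hε (x i) (hxP i)
  have hchoice : ∀ q : σ, ∃ c : ClassT M, q ∈ S →
      ∀ n, ∃ i, n ≤ i ∧ M.eval (x i) = some q ∧ f i = c := by
    intro q
    by_cases hq : q ∈ S
    · obtain ⟨c, hc⟩ := cofinal_pigeonhole f (fun i => M.eval (x i) = some q)
        (hxh q hq)
      exact ⟨c, fun _ => hc⟩
    · exact ⟨mkC M [] hε, fun h => absurd h hq⟩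
  choose F hF using hchoice
  have hstcF : ∀ q ∈ S, stc M (F q) = some q := by
    intro q hq
    obtain ⟨i, -, hev, hfi⟩ := hF q hq 0
    rw [← hfi]
    exact hev
  have hinj : Set.InjOn F S := by
    intro q hq q' hq' he
    have := (hstcF q hq).symm.trans (he ▸ hstcF q' hq')
    injection this
  refine ⟨S.image F, ?_, x, ?_, hxm, ?_⟩
  · rw [Finset.card_image_of_injOn (fun q hq => hinj (by simpa using hq)), hcard]
  · intro i
    rw [QA_prefLang]
    exact hxP i
  · intro c hc n
    rw [Finset.coe_image] at hc
    obtain ⟨q, hq, rfl⟩ := hc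
    obtain ⟨i, hi, -, hfi⟩ := hF q hq n
    exact ⟨i, hi, by rw [hfev i, hfi]⟩

variable (M) in
theorem entSet_transfer_down [Fintype σ] (hε : [] ∈ M.prefLang) {n : ℕ}
    (hT : ∃ T : Finset (ClassT M), T.card = n ∧ (QA M hε).EntangledStates ↑T) :
    ∃ S : Finset σ, S.card = n ∧ M.EntangledStates ↑S := by
  classical
  obtain ⟨T, hcard, x, hxP, hxm, hxh⟩ := hT
  have hxPM : ∀ i, x i ∈ M.prefLang := by
    intro i
    have := hxP i
    rwa [QA_prefLang] at this
  have hcls : ∀ {i : ℕ} {c : ClassT M}, (QA M hε).eval (x i) = some c →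
      ∃ h : x i ∈ M.prefLang, mkC M (x i) h = c := by
    intro i c hev
    have h := hxPM i
    rw [QA_eval_mem M hε (x i) h] at hev
    exact ⟨h, by injection hev⟩
  have hstchoice : ∀ c : ClassT M, ∃ q : σ, stc M c = some q := by
    intro c
    induction c using Quotient.ind with
    | _ s => exact eval_isSome_of_prefLang s.property
  choose st hst using hstchoice
  have hevst : ∀ {i : ℕ} {c : ClassT M}, (QA M hε).eval (x i) = some c →
      M.eval (x i) = some (st c) := by
    intro i c hev
    obtain ⟨h, rfl⟩ := hcls hev
    rw [← stc_mkC h]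
    exact hst _
  have hinj : Set.InjOn st T := by
    intro c hc c' hc' he
    by_contra hne
    -- find i ≤ j ≤ k with x i, x k in c and x j in c'
    obtain ⟨i, -, hi⟩ := hxh c hc 0
    obtain ⟨j, hij, hj⟩ := hxh c' hc' i
    obtain ⟨k, hjk, hk⟩ := hxh c hc j
    obtain ⟨hPi, hci⟩ := hcls hi
    obtain ⟨hPj, hcj⟩ := hcls hj
    obtain ⟨hPk, hck⟩ := hcls hk
    have hsim : M.Sim (x i) (x k) := mkC_eq_iff.mp (hci.trans hck.symm)
    have hevij : M.eval (x j) = M.eval (x i) := by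
      rw [hevst hi, hevst hj, he]
    have hbetween : Between (x j) (x i) (x k) := by
      rcases hxm with hm | hm
      · exact Or.inl ⟨hm i j hij, hm j k hjk⟩
      · exact Or.inr ⟨hm j k hjk, hm i j hij⟩
    have : M.Sim (x i) (x j) := Sim.of_between hsim hPj hevij hbetween
    exact hne ((hci.symm.trans (mkC_eq_iff.mpr this)).trans hcj)
  refine ⟨T.image st, ?_, x, hxPM, hxm, ?_⟩
  · rw [Finset.card_image_of_injOn (fun c hc => hinj (by simpa using hc)), hcard]
  · intro q hq n
    rw [Finset.coe_image] at hq
    obtain ⟨c, hc, rfl⟩ := hq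
    obtain ⟨i, hi, hev⟩ := hxh c hc n
    exact ⟨i, hi, hevst hev⟩


end PDFA

namespace PDFA

variable {α : Type*} {σ : Type*} [LinearOrder α] {M : PDFA α σ}

set_option linter.unusedSectionVars false

/-- A lower set of words in the co-lex order. -/
def IsLowerColex (γ : Set (List α)) : Prop :=
  ∀ x ∈ γ, ∀ y : List α, y.reverse ≤ x.reverse → y ∈ γ

/-- A point: a co-lex cut with a side (`false` = from below, `true` = from above). -/
def Pt (α : Type*) [LinearOrder α] := {γ : Set (List α) // IsLowerColex γ} × Bool

/-- The set `d` accumulates at the point `p`. -/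
def AccAt (d : Set (List α)) (p : Pt α) : Prop :=
  if p.2 then
    (∃ z ∈ d, z ∉ p.1.val) ∧
      ∀ v, v ∉ p.1.val → ∃ z ∈ d, z ∉ p.1.val ∧ z.reverse ≤ v.reverse
  else
    (∃ z ∈ d, z ∈ p.1.val) ∧
      ∀ x ∈ p.1.val, ∃ z ∈ d, z ∈ p.1.val ∧ x.reverse < z.reverse

theorem accAt_false {d γ : Set (List α)} {hlow : IsLowerColex γ} :
    AccAt d (⟨γ, hlow⟩, false) ↔
      (∃ z ∈ d, z ∈ γ) ∧ ∀ x ∈ γ, ∃ z ∈ d, z ∈ γ ∧ x.reverse < z.reverse := by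
  simp [AccAt]

theorem accAt_true {d γ : Set (List α)} {hlow : IsLowerColex γ} :
    AccAt d (⟨γ, hlow⟩, true) ↔
      (∃ z ∈ d, z ∉ γ) ∧ ∀ v, v ∉ γ → ∃ z ∈ d, z ∉ γ ∧ z.reverse ≤ v.reverse := by
  simp [AccAt]

/-- Strict order on points. -/
def PtLt (p q : Pt α) : Prop :=
  p.1.val ⊂ q.1.val ∨ (p.1.val = q.1.val ∧ p.2 = false ∧ q.2 = true)

theorem lower_subset_total {γ δ : Set (List α)} (hγ : IsLowerColex γ) (hδ : IsLowerColex δ) :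
    γ ⊆ δ ∨ δ ⊆ γ := by
  by_contra h
  push_neg at h
  obtain ⟨x, hxγ, hxδ⟩ := Set.not_subset.mp h.1
  obtain ⟨y, hyδ, hyγ⟩ := Set.not_subset.mp h.2
  rcases le_total x.reverse y.reverse with hle | hle
  · exact hxδ (hδ y hyδ x hle)
  · exact hyγ (hγ x hxγ y hle)

theorem ptLt_total (p q : Pt α) : p = q ∨ PtLt p q ∨ PtLt q p := by
  obtain ⟨⟨γ, hγ⟩, s⟩ := p
  obtain ⟨⟨δ, hδ⟩, t⟩ := q
  rcases lower_subset_total hγ hδ with hsub | hsub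
  · rcases Set.eq_or_ssubset_of_subset hsub with heq | hss
    · subst heq
      match s, t with
      | false, false => exact Or.inl rfl
      | false, true => exact Or.inr (Or.inl (Or.inr ⟨rfl, rfl, rfl⟩))
      | true, false => exact Or.inr (Or.inr (Or.inr ⟨rfl, rfl, rfl⟩))
      | true, true => exact Or.inl rfl
    · exact Or.inr (Or.inl (Or.inl hss))
  · rcases Set.eq_or_ssubset_of_subset hsub with heq | hss
    · subst heq
      match s, t with
      | false, false => exact Or.inl rfl
      | false, true => exact Or.inr (Or.inl (Or.inr ⟨rfl, rfl, rfl⟩))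
      | true, false => exact Or.inr (Or.inr (Or.inr ⟨rfl, rfl, rfl⟩))
      | true, true => exact Or.inl rfl
    · exact Or.inr (Or.inr (Or.inl hss))

variable (M) in
/-- The class of a word, as a set of words. -/
def cls (u : List α) : Set (List α) := {w | w ∈ M.prefLang ∧ M.Sim u w}

theorem cls_subset_prefLang {u : List α} : cls M u ⊆ M.prefLang := fun _ h => h.1

theorem mem_cls_self {u : List α} (hu : u ∈ M.prefLang) : u ∈ cls M u :=
  ⟨hu, Sim.refl u⟩

theorem cls_eq_of_sim {u v : List α} (h : M.Sim u v) : cls M u = cls M v := by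
  ext w
  exact ⟨fun hw => ⟨hw.1, (h.symm).trans hw.2⟩, fun hw => ⟨hw.1, h.trans hw.2⟩⟩

theorem eval_eq_of_mem_cls {u w : List α} (h : w ∈ cls M u) : M.eval w = M.eval u :=
  (Sim.eval_eq h.2).symm

/-- SEQPT: a convex entangled set in which at least two states occur has a point at which
all the classes it meets accumulate. -/
theorem seqpt {E : Set (List α)} (hEP : E ⊆ M.prefLang) (hconv : M.ConvexIn E)
    (hent : M.EntangledWords E) {z₁ z₂ : List α} (hz₁ : z₁ ∈ E) (hz₂ : z₂ ∈ E)
    (hne : M.eval z₁ ≠ M.eval z₂) :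
    ∃ p : Pt α, ∀ z ∈ E, AccAt (cls M z) p := by
  have hent' := hent
  obtain ⟨x, hxE, hxm, hxh⟩ := hent'
  -- absorption
  have habs : ∀ z ∈ E, ∀ i, M.eval (x i) = M.eval z → x i ∈ cls M z := by
    intro z hz i hev
    exact ⟨hEP (hxE i), Sim.single ⟨hEP hz, hEP (hxE i), hev.symm, E, hEP, hconv, hent, hz,
      hxE i⟩⟩
  -- hits of (the state of) z
  have hhit : ∀ z ∈ E, ∀ n, ∃ i, n ≤ i ∧ M.eval (x i) = M.eval z := by
    intro z hz n
    obtain ⟨qz, hqz⟩ := eval_isSome_of_prefLang (hEP hz)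
    obtain ⟨i, hi, hev⟩ := hxh qz ⟨z, hz, hqz⟩ n
    exact ⟨i, hi, hev.trans hqz.symm⟩
  rcases hxm with hm | hm
  · -- nondecreasing; strictness
    have hstrict : ∀ i, ∃ j, i ≤ j ∧ (x i).reverse < (x j).reverse := by
      intro i
      by_contra hcon
      push_neg at hcon
      have hconst : ∀ j, i ≤ j → x j = x i := by
        intro j hj
        exact List.reverse_injective (le_antisymm (hcon j hj) (hm i j hj))
      obtain ⟨j₁, hj₁, he₁⟩ := hhit z₁ hz₁ i
      obtain ⟨j₂, hj₂, he₂⟩ := hhit z₂ hz₂ i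
      rw [hconst j₁ hj₁] at he₁
      rw [hconst j₂ hj₂] at he₂
      exact hne (he₁.symm.trans he₂)
    have hlow : IsLowerColex {w : List α | ∃ i, w.reverse ≤ (x i).reverse} := by
      rintro w ⟨i, hwi⟩ y hy
      exact ⟨i, le_trans hy hwi⟩
    refine ⟨(⟨_, hlow⟩, false), ?_⟩
    intro z hz
    rw [accAt_false]
    constructor
    · obtain ⟨i, -, hev⟩ := hhit z hz 0
      exact ⟨x i, habs z hz i hev, i, le_refl _⟩
    · rintro w ⟨i, hwi⟩
      obtain ⟨j, hij, hlt⟩ := hstrict i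
      obtain ⟨k, hjk, hev⟩ := hhit z hz j
      exact ⟨x k, habs z hz k hev, ⟨k, le_refl _⟩,
        lt_of_le_of_lt hwi (lt_of_lt_of_le hlt (hm j k hjk))⟩
  · -- nonincreasing
    have hstrict : ∀ i, ∃ j, i ≤ j ∧ (x j).reverse < (x i).reverse := by
      intro i
      by_contra hcon
      push_neg at hcon
      have hconst : ∀ j, i ≤ j → x j = x i := by
        intro j hj
        exact List.reverse_injective (le_antisymm (hm i j hj) (hcon j hj))
      obtain ⟨j₁, hj₁, he₁⟩ := hhit z₁ hz₁ i
      obtain ⟨j₂, hj₂, he₂⟩ := hhit z₂ hz₂ i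
      rw [hconst j₁ hj₁] at he₁
      rw [hconst j₂ hj₂] at he₂
      exact hne (he₁.symm.trans he₂)
    have hlow : IsLowerColex {w : List α | ∀ i, w.reverse < (x i).reverse} := by
      intro w hw y hy
      exact fun i => lt_of_le_of_lt hy (hw i)
    refine ⟨(⟨_, hlow⟩, true), ?_⟩
    intro z hz
    rw [accAt_true]
    constructor
    · obtain ⟨i, -, hev⟩ := hhit z hz 0
      exact ⟨x i, habs z hz i hev, fun h => lt_irrefl _ (h i)⟩
    · intro v hv
      have : ∃ i, (x i).reverse ≤ v.reverse := by
        by_contra hcon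
        push_neg at hcon
        exact hv fun i => hcon i
      obtain ⟨i, hiv⟩ := this
      obtain ⟨k, hik, hev⟩ := hhit z hz i
      exact ⟨x k, habs z hz k hev, fun h => lt_irrefl _ (h k),
        le_trans (hm i k hik) hiv⟩

/-- Capture: a convex set with points on both sides of a cut contains points of every
set accumulating at that cut (on either side). -/
theorem capture {E : Set (List α)} (hconv : M.ConvexIn E) {γ : Set (List α)}
    {hlow : IsLowerColex γ} {a b : List α} (haE : a ∈ E) (haγ : a ∈ γ) (hbE : b ∈ E)
    (hbγ : b ∉ γ) {d : Set (List α)} (hdP : d ⊆ M.prefLang) {s : Bool}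
    (hacc : AccAt d (⟨γ, hlow⟩, s)) : ∃ z ∈ d, z ∈ E := by
  cases s with
  | false =>
    rw [accAt_false] at hacc
    obtain ⟨z, hzd, hzγ, hlt⟩ := hacc.2 a haγ
    have hzb : z.reverse ≤ b.reverse := by
      by_contra hc
      exact hbγ (hlow z hzγ b (le_of_not_ge hc))
    exact ⟨z, hzd, hconv haE hbE (hdP hzd) hlt.le hzb⟩
  | true =>
    rw [accAt_true] at hacc
    obtain ⟨z, hzd, hzγ, hle⟩ := hacc.2 b hbγ
    have haz : a.reverse ≤ z.reverse := by
      by_contra hc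
      exact hzγ (hlow a haγ z (le_of_not_ge hc))
    exact ⟨z, hzd, hconv haE hbE (hdP hzd) haz hle⟩

theorem exists_mem_cut_of_acc_lt {d : Set (List α)} {p : Pt α} {γ : Set (List α)}
    {hlow : IsLowerColex γ} {s : Bool} (hacc : AccAt d p) (hlt : PtLt p (⟨γ, hlow⟩, s)) :
    ∃ z ∈ d, z ∈ γ := by
  obtain ⟨⟨γ₁, hl₁⟩, s₁⟩ := p
  rcases hlt with hss | ⟨heq, hs₁, -⟩
  · simp only at hss
    cases s₁ with
    | false =>
      rw [accAt_false] at hacc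
      obtain ⟨z, hzd, hzγ₁⟩ := hacc.1
      exact ⟨z, hzd, hss.1 hzγ₁⟩
    | true =>
      rw [accAt_true] at hacc
      obtain ⟨w, hwγ, hwγ₁⟩ := Set.exists_of_ssubset hss
      obtain ⟨z, hzd, -, hzle⟩ := hacc.2 w hwγ₁
      exact ⟨z, hzd, hlow w hwγ z hzle⟩
  · simp only at heq hs₁
    subst hs₁
    rw [accAt_false] at hacc
    obtain ⟨z, hzd, hzγ₁⟩ := hacc.1
    exact ⟨z, hzd, heq ▸ hzγ₁⟩

theorem exists_not_mem_cut_of_lt_acc {d : Set (List α)} {p : Pt α} {γ : Set (List α)}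
    {hlow : IsLowerColex γ} {s : Bool} (hacc : AccAt d p) (hlt : PtLt (⟨γ, hlow⟩, s) p) :
    ∃ z ∈ d, z ∉ γ := by
  obtain ⟨⟨γ₂, hl₂⟩, s₂⟩ := p
  rcases hlt with hss | ⟨heq, -, hs₂⟩
  · simp only at hss
    cases s₂ with
    | true =>
      rw [accAt_true] at hacc
      obtain ⟨z, hzd, hzγ₂⟩ := hacc.1
      exact ⟨z, hzd, fun hz => hzγ₂ (hss.1 hz)⟩
    | false =>
      rw [accAt_false] at hacc
      obtain ⟨w, hwγ₂, hwγ⟩ := Set.exists_of_ssubset hss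
      obtain ⟨z, hzd, -, hzlt⟩ := hacc.2 w hwγ₂
      exact ⟨z, hzd, fun hz => hwγ (hlow z hz w hzlt.le)⟩
  · simp only at heq hs₂
    subst hs₂
    rw [accAt_true] at hacc
    obtain ⟨z, hzd, hzγ₂⟩ := hacc.1
    exact ⟨z, hzd, heq ▸ hzγ₂⟩

/-- Rule R: if a class accumulates on both sides of a point `pq`, then there is a point
at which it accumulates together with every class accumulating at `pq`. -/
theorem ruleR {u : List α} (hu : u ∈ M.prefLang) {p₁ p₂ pq : Pt α}
    (h1 : AccAt (cls M u) p₁) (h2 : AccAt (cls M u) p₂)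
    (l1 : PtLt p₁ pq) (l2 : PtLt pq p₂) :
    ∃ p : Pt α, AccAt (cls M u) p ∧
      ∀ v ∈ M.prefLang, AccAt (cls M v) pq → AccAt (cls M v) p := by
  classical
  obtain ⟨⟨γ, hlow⟩, s⟩ := pq
  obtain ⟨z₁, hz₁c, hz₁γ⟩ := exists_mem_cut_of_acc_lt h1 l1
  obtain ⟨z₂, hz₂c, hz₂γ⟩ := exists_not_mem_cut_of_lt_acc h2 l2
  have hsim : M.Sim z₁ z₂ := (hz₁c.2.symm).trans hz₂c.2
  obtain ⟨E, hEP, hEc, hEe, ⟨a, haE, haγ⟩, ⟨b, hbE, hbγ⟩, y, hyE, hy⟩ :=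
    Sim.straddle hsim hz₁γ hz₂γ
  have huy : M.Sim u y := hz₁c.2.trans hy
  by_cases hex : ∃ v, v ∈ M.prefLang ∧ AccAt (cls M v) (⟨γ, hlow⟩, s) ∧
      M.eval v ≠ M.eval u
  · obtain ⟨v, hvP, hvacc, hvne⟩ := hex
    obtain ⟨zv, hzvc, hzvE⟩ := capture hEc haE haγ hbE hbγ cls_subset_prefLang hvacc
    have hnev : M.eval zv ≠ M.eval y := by
      rw [eval_eq_of_mem_cls hzvc, Sim.eval_eq huy.symm]
      exact hvne
    obtain ⟨p, hp⟩ := seqpt hEP hEc hEe hzvE hyE hnev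
    refine ⟨p, ?_, ?_⟩
    · rw [cls_eq_of_sim huy]
      exact hp y hyE
    · intro v' hv'P hv'acc
      obtain ⟨zv', hzv'c, hzv'E⟩ := capture hEc haE haγ hbE hbγ cls_subset_prefLang hv'acc
      rw [cls_eq_of_sim hzv'c.2]
      exact hp zv' hzv'E
  · push_neg at hex
    refine ⟨p₁, h1, ?_⟩
    intro v hvP hvacc
    have hev : M.eval v = M.eval u := hex v hvP hvacc
    obtain ⟨zv, hzvc, hzvE⟩ := capture hEc haE haγ hbE hbγ cls_subset_prefLang hvacc
    have : M.Sim y zv := Sim.single ⟨hEP hyE, hEP hzvE, ?_, E, hEP, hEc, hEe, hyE, hzvE⟩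
    · have hcls : cls M v = cls M u := by
        rw [cls_eq_of_sim hzvc.2, ← cls_eq_of_sim this, ← cls_eq_of_sim huy]
      rw [hcls]
      exact h1
    · rw [eval_eq_of_mem_cls hzvc, hev, Sim.eval_eq huy]


end PDFA

namespace PDFA

variable {α : Type*} {σ : Type*} [LinearOrder α] {M : PDFA α σ}

set_option linter.unusedSectionVars false

theorem pair_point_aux {u v β x₁ x₂ : List α} (hnsim : ¬ M.Sim u v)
    (hβ : β ∈ cls M v) (hx₁ : x₁ ∈ cls M u) (hx₂ : x₂ ∈ cls M u)
    (hb : Between β x₁ x₂) :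
    ∃ p : Pt α, AccAt (cls M u) p ∧ AccAt (cls M v) p := by
  have hsim₁₂ : M.Sim x₁ x₂ := (hx₁.2.symm).trans hx₂.2
  have hevne : M.eval u ≠ M.eval v := by
    intro he
    have heβ : M.eval β = M.eval x₁ := by
      rw [eval_eq_of_mem_cls hβ, eval_eq_of_mem_cls hx₁, he]
    have : M.Sim x₁ β := Sim.of_between hsim₁₂ hβ.1 heβ hb
    exact hnsim ((hx₁.2.trans this).trans hβ.2.symm)
  obtain ⟨E, hEP, hEc, hEe, hβE, y, hyE, hsimy⟩ := Sim.cover hsim₁₂ hβ.1 hb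
  have hsimuy : M.Sim u y := hx₁.2.trans hsimy
  have hne : M.eval y ≠ M.eval β := by
    rw [eval_eq_of_mem_cls hβ, Sim.eval_eq hsimuy.symm]
    exact hevne
  obtain ⟨p, hp⟩ := seqpt hEP hEc hEe hyE hβE hne
  refine ⟨p, ?_, ?_⟩
  · rw [cls_eq_of_sim hsimuy]
    exact hp y hyE
  · rw [cls_eq_of_sim hβ.2]
    exact hp β hβE

theorem pair_point {u v : List α} (hnsim : ¬ M.Sim u v)
    (hinc1 : ∃ x ∈ cls M u, ∃ y ∈ cls M v, y.reverse ≤ x.reverse)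
    (hinc2 : ∃ x ∈ cls M u, ∃ y ∈ cls M v, x.reverse ≤ y.reverse) :
    ∃ p : Pt α, AccAt (cls M u) p ∧ AccAt (cls M v) p := by
  obtain ⟨x₁, hx₁, y₁, hy₁, h1⟩ := hinc1
  obtain ⟨x₂, hx₂, y₂, hy₂, h2⟩ := hinc2
  rcases le_total x₂.reverse y₁.reverse with hxy | hxy
  · exact pair_point_aux hnsim hy₁ hx₂ hx₁ (Or.inl ⟨hxy, h1⟩)
  · have hnsim' : ¬ M.Sim v u := fun h => hnsim h.symm
    obtain ⟨p, hp1, hp2⟩ := pair_point_aux hnsim' hx₂ hy₁ hy₂ (Or.inl ⟨hxy, h2⟩)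
    exact ⟨p, hp2, hp1⟩

/-- The main induction: a family of pairwise distinct, pairwise "overlapping" classes
accumulates jointly at a single point. -/
theorem antichain_point :
    ∀ (n : ℕ) (C : Finset (List α)), C.card = n → 2 ≤ n →
    (∀ w ∈ C, w ∈ M.prefLang) →
    (∀ w ∈ C, ∀ w' ∈ C, w ≠ w' → ¬ M.Sim w w') →
    (∀ w ∈ C, ∀ w' ∈ C, w ≠ w' →
      ∃ x ∈ cls M w, ∃ y ∈ cls M w', y.reverse ≤ x.reverse) →
    ∃ p : Pt α, ∀ w ∈ C, AccAt (cls M w) p := by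
  intro n
  induction n using Nat.strong_induction_on with
  | _ n ih =>
    intro C hcard hn hCP hdist hinc
    rcases eq_or_lt_of_le hn with h2 | h3
    · -- base case : two elements
      have hc2 : C.card = 2 := by rw [hcard, ← h2]
      obtain ⟨u, v, huv, rfl⟩ := Finset.card_eq_two.mp hc2
      have hu : u ∈ ({u, v} : Finset (List α)) := by simp
      have hv : v ∈ ({u, v} : Finset (List α)) := by simp
      obtain ⟨p, hp1, hp2⟩ := pair_point (hdist u hu v hv huv)
        (hinc u hu v hv huv)
        (by
          obtain ⟨x, hx, y, hy, hle⟩ := hinc v hv u hu huv.symm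
          exact ⟨y, hy, x, hx, hle⟩)
      refine ⟨p, fun w hw => ?_⟩
      rcases Finset.mem_insert.mp hw with rfl | hw'
      · exact hp1
      · rw [Finset.mem_singleton.mp hw']
        exact hp2
    · -- inductive step : at least three elements
      classical
      have hpt : ∀ w : List α, ∃ p : Pt α, w ∈ C →
          ∀ w' ∈ C.erase w, AccAt (cls M w') p := by
        intro w
        by_cases hw : w ∈ C
        · have hcard' : (C.erase w).card = n - 1 := by
            rw [Finset.card_erase_of_mem hw, hcard]
          obtain ⟨p, hp⟩ := ih (n-1) (by omega) (C.erase w) hcard' (by omega)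
            (fun w' hw' => hCP w' (Finset.mem_of_mem_erase hw'))
            (fun w₁ h₁ w₂ h₂ hne => hdist w₁ (Finset.mem_of_mem_erase h₁) w₂
              (Finset.mem_of_mem_erase h₂) hne)
            (fun w₁ h₁ w₂ h₂ hne => hinc w₁ (Finset.mem_of_mem_erase h₁) w₂
              (Finset.mem_of_mem_erase h₂) hne)
          exact ⟨p, fun _ => hp⟩
        · exact ⟨(⟨∅, fun x hx => absurd hx (Set.notMem_empty x)⟩, false),
            fun h => absurd h hw⟩
      choose pt hpt using hpt
      -- three distinct elements
      obtain ⟨w₀, h₀⟩ := Finset.card_pos.mp (by omega : 0 < C.card)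
      obtain ⟨w₁, h₁⟩ := Finset.card_pos.mp
        (by rw [Finset.card_erase_of_mem h₀, hcard]; omega : 0 < (C.erase w₀).card)
      obtain ⟨w₂, h₂⟩ := Finset.card_pos.mp
        (by rw [Finset.card_erase_of_mem h₁, Finset.card_erase_of_mem h₀, hcard]; omega :
          0 < ((C.erase w₀).erase w₁).card)
      have h₁C : w₁ ∈ C := Finset.mem_of_mem_erase h₁
      have h₂C : w₂ ∈ C := Finset.mem_of_mem_erase (Finset.mem_of_mem_erase h₂)
      have hne01 : w₀ ≠ w₁ := fun h => (Finset.ne_of_mem_erase h₁) h.symm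
      have hne12 : w₁ ≠ w₂ := fun h => (Finset.ne_of_mem_erase h₂) h.symm
      have hne02 : w₀ ≠ w₂ := fun h =>
        (Finset.ne_of_mem_erase (Finset.mem_of_mem_erase h₂)) h.symm
      -- if two of the removal points coincide, we are done
      by_cases heq : pt w₀ = pt w₁ ∨ pt w₀ = pt w₂ ∨ pt w₁ = pt w₂
      · rcases heq with he | he | he
        · refine ⟨pt w₀, fun w hw => ?_⟩
          by_cases hww : w = w₀
          · subst hww
            rw [he]
            exact hpt w₁ h₁C w (Finset.mem_erase.mpr ⟨hne01, hw⟩)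
          · exact hpt w₀ h₀ w (Finset.mem_erase.mpr ⟨hww, hw⟩)
        · refine ⟨pt w₀, fun w hw => ?_⟩
          by_cases hww : w = w₀
          · subst hww
            rw [he]
            exact hpt w₂ h₂C w (Finset.mem_erase.mpr ⟨hne02, hw⟩)
          · exact hpt w₀ h₀ w (Finset.mem_erase.mpr ⟨hww, hw⟩)
        · refine ⟨pt w₁, fun w hw => ?_⟩
          by_cases hww : w = w₁
          · subst hww
            rw [he]
            exact hpt w₂ h₂C w (Finset.mem_erase.mpr ⟨hne12, hw⟩)
          · exact hpt w₁ h₁C w (Finset.mem_erase.mpr ⟨hww, hw⟩)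
      · push_neg at heq
        obtain ⟨hne₀₁, hne₀₂, hne₁₂⟩ := heq
        -- the key step через ruleR
        have key : ∀ a m b : List α, a ∈ C → m ∈ C → b ∈ C → m ≠ a → m ≠ b →
            PtLt (pt a) (pt m) → PtLt (pt m) (pt b) →
            ∃ p : Pt α, ∀ w ∈ C, AccAt (cls M w) p := by
          intro a m b haC hmC hbC hma hmb l1 l2
          have hacc1 : AccAt (cls M m) (pt a) :=
            hpt a haC m (Finset.mem_erase.mpr ⟨hma, hmC⟩)
          have hacc2 : AccAt (cls M m) (pt b) :=
            hpt b hbC m (Finset.mem_erase.mpr ⟨hmb, hmC⟩)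
          obtain ⟨p, hp1, hp2⟩ := ruleR (hCP m hmC) hacc1 hacc2 l1 l2
          refine ⟨p, fun w hw => ?_⟩
          by_cases hwm : w = m
          · subst hwm; exact hp1
          · exact hp2 w (hCP w hw) (hpt m hmC w (Finset.mem_erase.mpr ⟨hwm, hw⟩))
        rcases ptLt_total (pt w₀) (pt w₁) with he | h01 | h01
        · exact absurd he hne₀₁
        · rcases ptLt_total (pt w₁) (pt w₂) with he | h12 | h12
          · exact absurd he hne₁₂
          · exact key w₀ w₁ w₂ h₀ h₁C h₂C hne01.symm hne12 h01 h12
          · rcases ptLt_total (pt w₀) (pt w₂) with he | h02 | h02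
            · exact absurd he hne₀₂
            · exact key w₀ w₂ w₁ h₀ h₂C h₁C hne02.symm hne12.symm h02 h12
            · exact key w₂ w₀ w₁ h₂C h₀ h₁C hne02 hne01 h02 h01
        · rcases ptLt_total (pt w₁) (pt w₂) with he | h12 | h12
          · exact absurd he hne₁₂
          · rcases ptLt_total (pt w₀) (pt w₂) with he | h02 | h02
            · exact absurd he hne₀₂
            · exact key w₁ w₀ w₂ h₁C h₀ h₂C hne01 hne02 h01 h02
            · exact key w₁ w₂ w₀ h₁C h₂C h₀ hne12.symm hne02.symm h12 h02
          · exact key w₂ w₁ w₀ h₂C h₁C h₀ hne12 hne01.symm h12 h01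


end PDFA

namespace PDFA

variable {α : Type*} {σ : Type*} [LinearOrder α] {M : PDFA α σ}

set_option linter.unusedSectionVars false

theorem mkC_out (c : ClassT M) :
    mkC M (Quotient.out c).val (Quotient.out c).property = c := by
  rw [mkC]
  exact Quotient.out_eq c

theorem QA_eval_cls (hε : [] ∈ M.prefLang) {c : ClassT M} {z : List α}
    (hz : z ∈ cls M (Quotient.out c).val) : (QA M hε).eval z = some c := by
  rw [QA_eval_mem M hε z hz.1]
  congr 1
  exact (mkC_eq_iff.mpr hz.2.symm).trans (mkC_out c)

theorem QA_I_eq_cls (hε : [] ∈ M.prefLang) (c : ClassT M) :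
    (QA M hε).I c = cls M (Quotient.out c).val := by
  ext w
  constructor
  · intro hw
    obtain ⟨h, hc⟩ := (QA_I M hε).mp hw
    refine ⟨h, ?_⟩
    have heq : mkC M w h = mkC M (Quotient.out c).val (Quotient.out c).property :=
      hc.trans (mkC_out c).symm
    exact (mkC_eq_iff.mp heq).symm
  · intro hw
    exact ⟨by rw [QA_prefLang]; exact hw.1, QA_eval_cls hε hw⟩

theorem entangled_of_point (hε : [] ∈ M.prefLang) {T : Finset (ClassT M)}
    (hTne : T.Nonempty) {p : Pt α}
    (hacc : ∀ c ∈ T, AccAt (cls M (Quotient.out c).val) p) :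
    (QA M hε).EntangledStates ↑T := by
  classical
  obtain ⟨⟨γ, hlow⟩, s⟩ := p
  set L : List (ClassT M) := T.toList with hL
  have hmemL : ∀ c, c ∈ T ↔ c ∈ L := fun c => (Finset.mem_toList).symm
  have hlen : 0 < L.length := by
    obtain ⟨c, hc⟩ := hTne
    rcases List.eq_nil_or_concat L with h | ⟨_, _, h⟩
    · exact absurd ((hmemL c).mp hc) (by rw [h]; simp)
    · rw [h]; simp
  have hgetT : ∀ k : Fin L.length, L.get k ∈ T := fun k => (hmemL _).mpr (List.get_mem _ _)
  cases s with
  | false =>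
    have haccc : ∀ c ∈ T, (∃ z ∈ cls M (Quotient.out c).val, z ∈ γ) ∧
        ∀ x ∈ γ, ∃ z ∈ cls M (Quotient.out c).val, z ∈ γ ∧ x.reverse < z.reverse :=
      fun c hc => accAt_false.mp (hacc c hc)
    obtain ⟨z₀, hz₀c, hz₀γ⟩ := (haccc _ (hgetT ⟨0, hlen⟩)).1
    have hstep : ∀ (n : ℕ) (w : List α), w ∈ γ → ∃ z, z ∈ γ ∧
        (w.reverse < z.reverse) ∧ z ∈ cls M (Quotient.out (L.get ⟨n % L.length,
          Nat.mod_lt n hlen⟩)).val := by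
      intro n w hw
      obtain ⟨z, hzc, hzγ, hlt⟩ := (haccc _ (hgetT ⟨n % L.length, Nat.mod_lt n hlen⟩)).2 w hw
      exact ⟨z, hzγ, hlt, hzc⟩
    choose fstep hf1 hf2 hf3 using fun n (w : {w : List α // w ∈ γ}) =>
      hstep n w.val w.property
    set F : ℕ → {w : List α // w ∈ γ} := fun n =>
      Nat.rec ⟨z₀, hz₀γ⟩ (fun n prev => ⟨fstep n prev, hf1 n prev⟩) n with hF
    have hFcls : ∀ n, ∃ c ∈ T, (F n).val ∈ cls M (Quotient.out c).val := by
      intro n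
      cases n with
      | zero => exact ⟨_, hgetT ⟨0, hlen⟩, hz₀c⟩
      | succ n => exact ⟨_, hgetT ⟨n % L.length, Nat.mod_lt n hlen⟩, hf3 n (F n)⟩
    have hFP : ∀ n, (F n).val ∈ M.prefLang := by
      intro n
      obtain ⟨c, -, hc⟩ := hFcls n
      exact hc.1
    have hFmono : ∀ i j, i ≤ j → ((F i).val).reverse ≤ ((F j).val).reverse := by
      intro i j hij
      induction j with
      | zero => cases Nat.le_zero.mp hij; exact le_refl _
      | succ j ihj =>
        rcases Nat.lt_or_ge i (j+1) with h | h
        · exact le_trans (ihj (by omega)) (hf2 j (F j)).le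
        · have : i = j + 1 := by omega
          rw [this]
    refine ⟨fun n => (F n).val, ?_, Or.inl hFmono, ?_⟩
    · intro i
      rw [QA_prefLang]
      exact hFP i
    · intro c hc n
      obtain ⟨k, rfl⟩ := List.mem_iff_get.mp ((hmemL _).mp hc)
      refine ⟨n * L.length + (k : ℕ) + 1, ?_, ?_⟩
      · have : n ≤ n * L.length := Nat.le_mul_of_pos_right n hlen
        omega
      · have hcls := hf3 (n * L.length + (k : ℕ)) (F (n * L.length + (k : ℕ)))
        have hmod : (n * L.length + (k : ℕ)) % L.length = (k : ℕ) := by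
          rw [Nat.mul_comm, Nat.mul_add_mod]
          exact Nat.mod_eq_of_lt k.isLt
        have hkk : (⟨(n * L.length + (k : ℕ)) % L.length,
            Nat.mod_lt _ hlen⟩ : Fin L.length) = k := Fin.ext hmod
        rw [hkk] at hcls
        exact QA_eval_cls hε hcls
  | true =>
    have haccc : ∀ c ∈ T, (∃ z ∈ cls M (Quotient.out c).val, z ∉ γ) ∧
        ∀ v, v ∉ γ → ∃ z ∈ cls M (Quotient.out c).val, z ∉ γ ∧ z.reverse ≤ v.reverse :=
      fun c hc => accAt_true.mp (hacc c hc)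
    obtain ⟨z₀, hz₀c, hz₀γ⟩ := (haccc _ (hgetT ⟨0, hlen⟩)).1
    have hstep : ∀ (n : ℕ) (w : List α), w ∉ γ → ∃ z, ¬ (z ∈ γ) ∧
        (z.reverse ≤ w.reverse) ∧ z ∈ cls M (Quotient.out (L.get ⟨n % L.length,
          Nat.mod_lt n hlen⟩)).val := by
      intro n w hw
      obtain ⟨z, hzc, hzγ, hle⟩ := (haccc _ (hgetT ⟨n % L.length, Nat.mod_lt n hlen⟩)).2 w hw
      exact ⟨z, hzγ, hle, hzc⟩
    choose fstep hf1 hf2 hf3 using fun n (w : {w : List α // ¬ (w ∈ γ)}) =>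
      hstep n w.val w.property
    set F : ℕ → {w : List α // ¬ (w ∈ γ)} := fun n =>
      Nat.rec ⟨z₀, hz₀γ⟩ (fun n prev => ⟨fstep n prev, hf1 n prev⟩) n with hF
    have hFcls : ∀ n, ∃ c ∈ T, (F n).val ∈ cls M (Quotient.out c).val := by
      intro n
      cases n with
      | zero => exact ⟨_, hgetT ⟨0, hlen⟩, hz₀c⟩
      | succ n => exact ⟨_, hgetT ⟨n % L.length, Nat.mod_lt n hlen⟩, hf3 n (F n)⟩
    have hFP : ∀ n, (F n).val ∈ M.prefLang := by
      intro n
      obtain ⟨c, -, hc⟩ := hFcls n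
      exact hc.1
    have hFmono : ∀ i j, i ≤ j → ((F j).val).reverse ≤ ((F i).val).reverse := by
      intro i j hij
      induction j with
      | zero => cases Nat.le_zero.mp hij; exact le_refl _
      | succ j ihj =>
        rcases Nat.lt_or_ge i (j+1) with h | h
        · exact le_trans (hf2 j (F j)) (ihj (by omega))
        · have : i = j + 1 := by omega
          rw [this]
    refine ⟨fun n => (F n).val, ?_, Or.inr hFmono, ?_⟩
    · intro i
      rw [QA_prefLang]
      exact hFP i
    · intro c hc n
      obtain ⟨k, rfl⟩ := List.mem_iff_get.mp ((hmemL _).mp hc)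
      refine ⟨n * L.length + (k : ℕ) + 1, ?_, ?_⟩
      · have : n ≤ n * L.length := Nat.le_mul_of_pos_right n hlen
        omega
      · have hcls := hf3 (n * L.length + (k : ℕ)) (F (n * L.length + (k : ℕ)))
        have hmod : (n * L.length + (k : ℕ)) % L.length = (k : ℕ) := by
          rw [Nat.mul_comm, Nat.mul_add_mod]
          exact Nat.mod_eq_of_lt k.isLt
        have hkk : (⟨(n * L.length + (k : ℕ)) % L.length,
            Nat.mod_lt _ hlen⟩ : Fin L.length) = k := Fin.ext hmod
        rw [hkk] at hcls
        exact QA_eval_cls hε hcls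

/-- Every antichain of the quotient automaton is an entangled set. -/
theorem entangled_of_antichain (hε : [] ∈ M.prefLang) {T : Finset (ClassT M)}
    (hanti : (QA M hε).IsColexAntichain ↑T) : (QA M hε).EntangledStates ↑T := by
  classical
  rcases Nat.lt_or_ge T.card 2 with hsmall | hbig
  · rcases Nat.lt_or_ge T.card 1 with h0 | h1
    · have : T = ∅ := Finset.card_eq_zero.mp (by omega)
      subst this
      refine ⟨fun _ => [], fun _ => by rw [QA_prefLang]; exact hε,
        Or.inl fun _ _ _ => le_refl _, ?_⟩
      intro q hq
      simp at hq
    · obtain ⟨c, hc⟩ := Finset.card_eq_one.mp (by omega : T.card = 1)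
      subst hc
      refine ⟨fun _ => (Quotient.out c).val, fun _ => by
          rw [QA_prefLang]; exact (Quotient.out c).property,
        Or.inl fun _ _ _ => le_refl _, ?_⟩
      intro q hq n
      have : q = c := by simpa using hq
      subst this
      exact ⟨n, le_refl n, QA_eval_cls hε (mem_cls_self (Quotient.out q).property)⟩
  · set rep : ClassT M → List α := fun c => (Quotient.out c).val with hrep
    have hrepinj : Function.Injective rep := by
      intro c c' h
      rw [← Quotient.out_eq c, ← Quotient.out_eq c']
      exact Quotient.sound (h ▸ Sim.refl (rep c) : M.Sim (rep c) (rep c'))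
    set C : Finset (List α) := T.image rep with hC
    have hcardC : C.card = T.card := Finset.card_image_of_injective _ hrepinj
    have hmemC : ∀ w ∈ C, ∃ c ∈ T, rep c = w := by
      intro w hw
      obtain ⟨c, hc, hcw⟩ := Finset.mem_image.mp hw
      exact ⟨c, hc, hcw⟩
    obtain ⟨p, hp⟩ := antichain_point C.card C rfl (by omega)
      (by
        rintro w hw
        obtain ⟨c, -, rfl⟩ := hmemC w hw
        exact (Quotient.out c).property)
      (by
        rintro w hw w' hw' hne hsim
        obtain ⟨c, -, rfl⟩ := hmemC w hw
        obtain ⟨c', -, rfl⟩ := hmemC w' hw'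
        have hcc : c = c' := by
          rw [← mkC_out c, ← mkC_out c']
          exact mkC_eq_iff.mpr hsim
        exact hne (congrArg rep hcc))
      (by
        rintro w hw w' hw' hne
        obtain ⟨c, hcT, rfl⟩ := hmemC w hw
        obtain ⟨c', hc'T, rfl⟩ := hmemC w' hw'
        have hcc : c ≠ c' := fun h => hne (congrArg rep h)
        have h1 := (hanti c hcT c' hc'T hcc).1
        rw [stateLt] at h1
        push_neg at h1
        obtain ⟨x, hx, y, hy, hle⟩ := h1 hcc
        rw [QA_I_eq_cls hε] at hx hy
        exact ⟨x, hx, y, hy, hle⟩)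
    refine entangled_of_point hε (Finset.card_pos.mp (by omega)) (p := p) ?_
    intro c hc
    exact hp (rep c) (Finset.mem_image_of_mem rep hc)


end PDFA

namespace PDFA

variable {α : Type*} [LinearOrder α]

set_option linter.unusedSectionVars false

/-- Relabelling the states of an automaton along an equivalence. -/
def relabel {τ τ' : Type*} (N : PDFA α τ) (e : τ ≃ τ') : PDFA α τ' where
  step := fun s a => (N.step (e.symm s) a).map e
  start := e N.start
  accept := e '' N.accept

theorem relabel_evalFrom {τ τ' : Type*} (N : PDFA α τ) (e : τ ≃ τ') (q : τ) (w : List α) :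
    (relabel N e).evalFrom (e q) w = (N.evalFrom q w).map e := by
  induction w generalizing q with
  | nil => rfl
  | cons a w ih =>
    have hs : (relabel N e).step (e q) a = (N.step q a).map e := by
      show (N.step (e.symm (e q)) a).map e = _
      rw [Equiv.symm_apply_apply]
    rcases h : N.step q a with _ | p
    · show (match (relabel N e).step (e q) a with
        | none => none
        | some q' => (relabel N e).evalFrom q' w) =
        (match N.step q a with
        | none => none
        | some q' => N.evalFrom q' w).map e
      rw [hs, h]
      rfl
    · show (match (relabel N e).step (e q) a with
        | none => none
        | some q' => (relabel N e).evalFrom q' w) =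
        (match N.step q a with
        | none => none
        | some q' => N.evalFrom q' w).map e
      rw [hs, h]
      exact ih p

theorem relabel_eval {τ τ' : Type*} (N : PDFA α τ) (e : τ ≃ τ') (w : List α) :
    (relabel N e).eval w = (N.eval w).map e :=
  relabel_evalFrom N e N.start w

theorem relabel_language {τ τ' : Type*} (N : PDFA α τ) (e : τ ≃ τ') :
    (relabel N e).language = N.language := by
  ext w
  constructor
  · rintro ⟨s, hev, hacc⟩
    rw [relabel_eval] at hev
    obtain ⟨q', hq', heq⟩ := hacc
    rcases h : N.eval w with _ | p
    · rw [h] at hev; exact absurd hev (by simp)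
    · rw [h] at hev
      simp only [Option.map_some] at hev
      have hps : e p = s := by injection hev
      refine ⟨p, h, ?_⟩
      have hqp : q' = p := e.injective (heq.trans hps.symm)
      rwa [← hqp]
  · rintro ⟨q, hev, hacc⟩
    refine ⟨e q, ?_, ⟨q, hacc, rfl⟩⟩
    rw [relabel_eval, hev]
    rfl

theorem relabel_prefLang {τ τ' : Type*} (N : PDFA α τ) (e : τ ≃ τ') :
    (relabel N e).prefLang = N.prefLang := by
  unfold prefLang
  rw [relabel_language]

theorem relabel_trim {τ τ' : Type*} (N : PDFA α τ) (e : τ ≃ τ') (h : N.Trim) :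
    (relabel N e).Trim := by
  constructor
  · intro s
    obtain ⟨w, hw⟩ := h.1 (e.symm s)
    refine ⟨w, ?_⟩
    rw [relabel_eval, hw]
    show some (e (e.symm s)) = some s
    rw [Equiv.apply_symm_apply]
  · intro s
    obtain ⟨w, q', hw, hacc⟩ := h.2 (e.symm s)
    refine ⟨w, e q', ?_, ⟨q', hacc, rfl⟩⟩
    have := relabel_evalFrom N e (e.symm s) w
    rw [Equiv.apply_symm_apply] at this
    rw [this, hw]
    rfl

theorem relabel_I {τ τ' : Type*} (N : PDFA α τ) (e : τ ≃ τ') (q : τ) :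
    (relabel N e).I (e q) = N.I q := by
  ext w
  unfold I
  rw [Set.mem_setOf_eq, Set.mem_setOf_eq, relabel_prefLang, relabel_eval]
  constructor
  · rintro ⟨h1, h2⟩
    refine ⟨h1, ?_⟩
    rcases hev : N.eval w with _ | p
    · rw [hev] at h2; exact absurd h2 (by simp)
    · rw [hev] at h2
      simp only [Option.map_some] at h2
      have : p = q := e.injective (by injection h2)
      rw [this]
  · rintro ⟨h1, h2⟩
    exact ⟨h1, by rw [h2]; rfl⟩

theorem relabel_stateLt {τ τ' : Type*} (N : PDFA α τ) (e : τ ≃ τ') (q₁ q₂ : τ) :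
    (relabel N e).stateLt (e q₁) (e q₂) ↔ N.stateLt q₁ q₂ := by
  unfold stateLt
  rw [relabel_I, relabel_I]
  constructor
  · rintro ⟨hne, h⟩
    exact ⟨fun hc => hne (congrArg e hc), h⟩
  · rintro ⟨hne, h⟩
    exact ⟨fun hc => hne (e.injective hc), h⟩

theorem relabel_entangled {τ τ' : Type*} [DecidableEq τ'] (N : PDFA α τ) (e : τ ≃ τ')
    (S : Finset τ) :
    (relabel N e).EntangledStates ↑(S.image e) ↔ N.EntangledStates ↑S := by
  constructor
  · rintro ⟨x, hP, hm, hh⟩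
    refine ⟨x, fun i => by rw [← relabel_prefLang N e]; exact hP i, hm, ?_⟩
    intro q hq n
    obtain ⟨i, hi, hev⟩ := hh (e q) (by
      rw [Finset.coe_image]
      exact Set.mem_image_of_mem e hq) n
    rw [relabel_eval] at hev
    refine ⟨i, hi, ?_⟩
    rcases h : N.eval (x i) with _ | p
    · rw [h] at hev; exact absurd hev (by simp)
    · rw [h] at hev
      simp only [Option.map_some] at hev
      have : p = q := e.injective (by injection hev)
      rw [← this]
  · rintro ⟨x, hP, hm, hh⟩
    refine ⟨x, fun i => by rw [relabel_prefLang N e]; exact hP i, hm, ?_⟩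
    intro s hs n
    rw [Finset.coe_image] at hs
    obtain ⟨q, hq, rfl⟩ := hs
    obtain ⟨i, hi, hev⟩ := hh q hq n
    refine ⟨i, hi, ?_⟩
    rw [relabel_eval, hev]
    rfl

theorem relabel_antichain {τ τ' : Type*} [DecidableEq τ'] (N : PDFA α τ) (e : τ ≃ τ')
    (S : Finset τ) :
    (relabel N e).IsColexAntichain ↑(S.image e) ↔ N.IsColexAntichain ↑S := by
  constructor
  · intro h q₁ h₁ q₂ h₂ hne
    have := h (e q₁) (by rw [Finset.coe_image]; exact Set.mem_image_of_mem e h₁)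
      (e q₂) (by rw [Finset.coe_image]; exact Set.mem_image_of_mem e h₂)
      (fun hc => hne (e.injective hc))
    rw [relabel_stateLt, relabel_stateLt] at this
    exact this
  · intro h s₁ h₁ s₂ h₂ hne
    rw [Finset.coe_image] at h₁ h₂
    obtain ⟨q₁, hq₁, rfl⟩ := h₁
    obtain ⟨q₂, hq₂, rfl⟩ := h₂
    have := h q₁ hq₁ q₂ hq₂ (fun hc => hne (congrArg e hc))
    rw [← relabel_stateLt N e, ← relabel_stateLt N e] at this
    exact this

theorem relabel_ent {τ τ' : Type*} [DecidableEq τ] [DecidableEq τ'] [Fintype τ] [Fintype τ']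
    (N : PDFA α τ) (e : τ ≃ τ') :
    (relabel N e).ent = N.ent := by
  unfold ent
  congr 1
  ext n
  constructor
  · rintro ⟨S', hcard, hent⟩
    refine ⟨S'.image e.symm, ?_, ?_⟩
    · rw [Finset.card_image_of_injective _ e.symm.injective, hcard]
    · rw [← relabel_entangled N e]
      have : (S'.image e.symm).image e = S' := by
        rw [Finset.image_image]
        simp [Function.comp]
      rw [this]
      exact hent
  · rintro ⟨S, hcard, hent⟩
    exact ⟨S.image e, by rw [Finset.card_image_of_injective _ e.injective, hcard],
      (relabel_entangled N e S).mpr hent⟩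

theorem relabel_width {τ τ' : Type*} [DecidableEq τ] [DecidableEq τ'] [Fintype τ] [Fintype τ']
    (N : PDFA α τ) (e : τ ≃ τ') :
    (relabel N e).width = N.width := by
  unfold width
  congr 1
  ext n
  constructor
  · rintro ⟨S', hcard, hanti⟩
    refine ⟨S'.image e.symm, ?_, ?_⟩
    · rw [Finset.card_image_of_injective _ e.symm.injective, hcard]
    · rw [← relabel_antichain N e]
      have : (S'.image e.symm).image e = S' := by
        rw [Finset.image_image]
        simp [Function.comp]
      rw [this]
      exact hanti
  · rintro ⟨S, hcard, hanti⟩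
    exact ⟨S.image e, by rw [Finset.card_image_of_injective _ e.injective, hcard],
      (relabel_antichain N e S).mpr hanti⟩

end PDFA


/-- Theorem: for every (trim) DFA `B` there is an equivalent DFA `B'` with
`ent(B) = ent(B') = width(B')`. -/
theorem exists_equivalent_dfa_width_eq_ent {α σ : Type*} [LinearOrder α] [Fintype σ]
    (M : PDFA α σ) (hM : M.Trim) :
    ∃ (m : ℕ) (M' : PDFA α (Fin m)), M'.Trim ∧ M'.language = M.language ∧
      M.ent = M'.ent ∧ M'.ent = M'.width := by

  classical
  obtain ⟨w₀, q₀, hq₀, hacc₀⟩ := hM.2 M.start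
  have hε : [] ∈ M.prefLang := ⟨w₀, q₀, hq₀, hacc₀⟩
  haveI : Finite (PDFA.ClassT M) := PDFA.finite_classT
  haveI : Fintype (PDFA.ClassT M) := Fintype.ofFinite _
  set N := PDFA.QA M hε with hN
  set e : PDFA.ClassT M ≃ Fin (Fintype.card (PDFA.ClassT M)) := Fintype.equivFin _ with he
  refine ⟨Fintype.card (PDFA.ClassT M), PDFA.relabel N e,
    PDFA.relabel_trim N e (PDFA.QA_trim M hε), ?_, ?_, ?_⟩
  · rw [PDFA.relabel_language, PDFA.QA_language]
  · rw [PDFA.relabel_ent]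
    unfold PDFA.ent
    congr 1
    ext n
    exact ⟨fun h => PDFA.entSet_transfer_up M hε h, fun h => PDFA.entSet_transfer_down M hε h⟩
  · rw [PDFA.relabel_ent, PDFA.relabel_width]
    unfold PDFA.ent PDFA.width
    congr 1
    ext n
    constructor
    · rintro ⟨T, hcard, hent⟩
      exact ⟨T, hcard, PDFA.isColexAntichain_of_entangledStates hent⟩
    · rintro ⟨T, hcard, hanti⟩
      exact ⟨T, hcard, PDFA.entangled_of_antichain hε hanti⟩
end

section
/- Let A be an NFA with state set Q and let q_1, …, q_h be states of A. If there exist strings ν_1, …, ν_h ∈ Pref(L(A)) with ν_i ∈ I_{q_i} for every i and ν_1 ≺ ν_2 ≺ ⋯ ≺ ν_h in co-lex order, then there exist strings ν'_1, …, ν'_h ∈ Pref(L(A)) with ν'_i ∈ I_{q_i} for every i, ν'_1 ≺ ⋯ ≺ ν'_h, and |ν'_i| ≤ h − 2 + Σ_{t=1}^{h} |Q|^t for every i = 1, …, h. -/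
/-- A nondeterministic finite automaton with a unique initial state. -/
structure PNFA (α : Type*) (σ : Type*) where
  step : σ → α → Set σ
  start : σ
  accept : Set σ

namespace PNFA

variable {α : Type*} {σ : Type*}

/-- The transition function extended to strings, from a set of states. -/
def evalFrom (M : PNFA α σ) (S : Set σ) (w : List α) : Set σ :=
  w.foldl (fun T a => ⋃ q ∈ T, M.step q a) S

/-- `δ(s, w)`: the set of states reachable from the initial state reading `w`. -/
def eval (M : PNFA α σ) (w : List α) : Set σ :=
  M.evalFrom {M.start} w

/-- The language accepted by the automaton. -/
def language (M : PNFA α σ) : Set (List α) :=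
  {w | ∃ q ∈ M.eval w, q ∈ M.accept}

/-- `Pref(L(M))`: the set of prefixes of accepted words. -/
def prefLang (M : PNFA α σ) : Set (List α) :=
  {w | ∃ v, w ++ v ∈ M.language}

/-- `I_q`: the words of `Pref(L(M))` reaching state `q`. -/
def I (M : PNFA α σ) (q : σ) : Set (List α) :=
  {w | w ∈ M.prefLang ∧ q ∈ M.eval w}

/-- Every state is reachable from the initial state, and from every state a final state
can be reached. -/
def Trim (M : PNFA α σ) : Prop :=
  (∀ q : σ, ∃ w : List α, q ∈ M.eval w) ∧
  (∀ q : σ, ∃ w : List α, ∃ q' ∈ M.accept, q' ∈ M.evalFrom {q} w)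

end PNFA

section AuxiliaryLemmas

theorem PNFA.evalFrom_append' {α : Type*} {σ : Type*} (M : PNFA α σ) (S : Set σ) (u v : List α) :
    M.evalFrom S (u ++ v) = M.evalFrom (M.evalFrom S u) v := by
  simp [evalFrom, List.foldl_append]

theorem PNFA.evalFrom_biUnion' {α : Type*} {σ : Type*} (M : PNFA α σ) (S : Set σ) (w : List α) :
    M.evalFrom S w = ⋃ p ∈ S, M.evalFrom {p} w := by
  induction w generalizing S with
  | nil => simp [evalFrom]
  | cons a w ih =>
      show M.evalFrom (⋃ q ∈ S, M.step q a) w = _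
      rw [ih]
      have hsingle : ∀ p : σ, M.evalFrom {p} (a :: w) = ⋃ x ∈ M.step p a, M.evalFrom {x} w := by
        intro p
        show M.evalFrom (⋃ q ∈ ({p} : Set σ), M.step q a) w = _
        rw [ih]
        simp
      simp only [hsingle]
      ext x
      simp only [Set.mem_iUnion]
      tauto

theorem PNFA.eval_append_iff' {α : Type*} {σ : Type*} (M : PNFA α σ) (u v : List α) (x : σ) :
    x ∈ M.eval (u ++ v) ↔ ∃ p, p ∈ M.eval u ∧ x ∈ M.evalFrom {p} v := by
  rw [PNFA.eval, PNFA.evalFrom_append', PNFA.evalFrom_biUnion']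
  simp [eval]

theorem PNFA.mem_I_iff' {α : Type*} {σ : Type*} (M : PNFA α σ) (hM : M.Trim) (q : σ) (w : List α) :
    w ∈ M.I q ↔ q ∈ M.eval w := by
  constructor
  · exact fun h => h.2
  · intro h
    refine ⟨?_, h⟩
    obtain ⟨v, q', hq', hq'2⟩ := hM.2 q
    refine ⟨v, q', ?_, hq'⟩
    rw [PNFA.eval_append_iff']
    exact ⟨q, h, hq'2⟩


section LexLemmas
variable {α : Type*} [LinearOrder α]

theorem cons_lt_cons_iff' (a b : α) (x y : List α) :
    a :: x < b :: y ↔ a < b ∨ (a = b ∧ x < y) := by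
  constructor
  · intro h
    cases h with
    | cons h => exact Or.inr ⟨rfl, h⟩
    | rel h => exact Or.inl h
  · rintro (h | ⟨rfl, h⟩)
    · exact List.Lex.rel h
    · exact List.Lex.cons h

theorem append_lt_append_left_iff' (u x y : List α) : u ++ x < u ++ y ↔ x < y := by
  induction u with
  | nil => rfl
  | cons a u ih => simpa [cons_lt_cons_iff'] using ih

theorem lex_indiff' : ∀ (u w : List α), ¬ u <+: w → ∀ (x y : List α),
    ((u ++ x < w ↔ u ++ y < w) ∧ (w < u ++ x ↔ w < u ++ y))
  | [], w, hp => absurd List.nil_prefix hp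
  | a :: u, [], _ => fun x y => by
      constructor
      · constructor <;> (intro h; exact absurd h (List.not_lt_nil _))
      · constructor <;> (intro _; exact List.Lex.nil)
  | a :: u, b :: w, hp => fun x y => by
      rcases eq_or_ne a b with rfl | hab
      · have hp' : ¬ u <+: w := fun hc => hp (List.cons_prefix_cons.mpr ⟨rfl, hc⟩)
        have H := lex_indiff' u w hp' x y
        constructor
        · rw [List.cons_append, List.cons_append, cons_lt_cons_iff', cons_lt_cons_iff', H.1]
        · rw [List.cons_append, List.cons_append, cons_lt_cons_iff', cons_lt_cons_iff', H.2]
      · constructor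
        · rw [List.cons_append, List.cons_append, cons_lt_cons_iff', cons_lt_cons_iff']
          simp [hab]
        · rw [List.cons_append, List.cons_append, cons_lt_cons_iff', cons_lt_cons_iff']
          simp [hab.symm]

end LexLemmas

theorem pigeon_nat' {ι β : Type*} [Fintype ι] [DecidableEq ι] [Fintype β]
    (S : ℕ → Finset ι) (G : ℕ → ι → β) (T : ℕ)
    (hanti : ∀ ⦃a b : ℕ⦄, a ≤ b → S b ⊆ S a)
    (hne : ∀ t, t ≤ T → (S t).Nonempty)
    (hT : ∑ m ∈ Finset.Icc 1 (Fintype.card ι), (Fintype.card β) ^ m < T + 1) :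
    ∃ t1 t2, t1 < t2 ∧ t2 ≤ T ∧ S t1 = S t2 ∧ ∀ j ∈ S t1, G t1 j = G t2 j := by
  classical
  by_contra hcon
  push_neg at hcon
  have hconst : ∀ t1 t2 : ℕ, (S t1).card = (S t2).card → S t1 = S t2 := by
    intro t1 t2 hc
    rcases le_total t1 t2 with hle | hle
    · exact (Finset.eq_of_subset_of_card_le (hanti hle) hc.le).symm
    · exact Finset.eq_of_subset_of_card_le (hanti hle) hc.ge
  have hmem : ∀ t ∈ Finset.range (T + 1), (S t).card ∈ Finset.Icc 1 (Fintype.card ι) := by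
    intro t ht
    rw [Finset.mem_range] at ht
    rw [Finset.mem_Icc]
    exact ⟨Finset.card_pos.mpr (hne t (Nat.lt_succ_iff.mp ht)),
      le_trans (Finset.card_le_card (Finset.subset_univ _)) Finset.card_univ.le⟩
  have hsum := Finset.card_eq_sum_card_fiberwise hmem
  have hfib : ∀ v ∈ Finset.Icc 1 (Fintype.card ι),
      ((Finset.range (T + 1)).filter (fun t => (S t).card = v)).card ≤ (Fintype.card β) ^ v := by
    intro v _
    set F := (Finset.range (T + 1)).filter (fun t => (S t).card = v) with hF
    rcases F.eq_empty_or_nonempty with he | ⟨t0, ht0⟩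
    · simp [he]
    have ht0' := ht0
    rw [hF, Finset.mem_filter, Finset.mem_range] at ht0'
    have hScard : ∀ t ∈ F, S t = S t0 := by
      intro t ht
      rw [hF, Finset.mem_filter] at ht
      exact hconst t t0 (ht.2.trans ht0'.2.symm)
    have hinj : Set.InjOn (fun t => fun j : (S t0 : Finset ι) => G t (j : ι)) (F : Set ℕ) := by
      intro t1 ht1 t2 ht2 heq
      by_contra hne'
      rcases Ne.lt_or_gt hne' with hlt | hlt
      · have hT2 : t2 ≤ T := by
          have := ht2; rw [hF] at this; simp only [Finset.coe_filter, Set.mem_setOf_eq,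
            Finset.mem_range] at this; omega
        have hS12 : S t1 = S t2 := (hScard t1 ht1).trans (hScard t2 ht2).symm
        obtain ⟨j, hj, hGne⟩ := hcon t1 t2 hlt hT2 hS12
        have hj0 : j ∈ S t0 := (hScard t1 ht1) ▸ hj
        exact hGne (congrFun heq ⟨j, hj0⟩)
      · have hT1 : t1 ≤ T := by
          have := ht1; rw [hF] at this; simp only [Finset.coe_filter, Set.mem_setOf_eq,
            Finset.mem_range] at this; omega
        have hS12 : S t2 = S t1 := (hScard t2 ht2).trans (hScard t1 ht1).symm
        obtain ⟨j, hj, hGne⟩ := hcon t2 t1 hlt hT1 hS12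
        have hj0 : j ∈ S t0 := (hScard t2 ht2) ▸ hj
        exact hGne (congrFun heq.symm ⟨j, hj0⟩)
    have hcard : F.card ≤ Fintype.card ({x // x ∈ S t0} → β) :=
      (Finset.card_le_card_of_injOn _ (fun a _ => Finset.mem_univ _) hinj).trans_eq
        Finset.card_univ
    rw [Fintype.card_fun, Fintype.card_coe, ht0'.2] at hcard
    exact hcard
  have hfin : T + 1 ≤ ∑ m ∈ Finset.Icc 1 (Fintype.card ι), (Fintype.card β) ^ m := by
    calc T + 1 = (Finset.range (T + 1)).card := (Finset.card_range _).symm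
      _ = _ := hsum
      _ ≤ _ := Finset.sum_le_sum hfib
  omega

theorem cut_step' {α σ : Type*} [LinearOrder α] [Fintype σ] (M : PNFA α σ) {h : ℕ}
    (q : Fin h → σ) (ν : Fin h → List α)
    (hre : ∀ j, q j ∈ M.eval (ν j))
    (hinc : ∀ j k : Fin h, j < k → (ν j).reverse < (ν k).reverse)
    (i : Fin h)
    (hlong : ∑ m ∈ Finset.Icc 1 h, (Fintype.card σ) ^ m ≤ (ν i).length) :
    ∃ ν' : Fin h → List α, (∀ j, q j ∈ M.eval (ν' j)) ∧
      (∀ j k : Fin h, j < k → (ν' j).reverse < (ν' k).reverse) ∧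
      (∑ j, (ν' j).length) < ∑ j, (ν j).length := by
  classical
  set r : Fin h → List α := fun j => (ν j).reverse with hr
  have hrlen : ∀ j, (r j).length = (ν j).length := fun j => by simp [hr]
  -- splitting states
  have hsplit : ∀ (t : ℕ) (j : Fin h), ∃ p, p ∈ M.eval ((ν j).take ((ν j).length - t)) ∧
      q j ∈ M.evalFrom {p} ((ν j).drop ((ν j).length - t)) := by
    intro t j
    have h2 : q j ∈ M.eval ((ν j).take ((ν j).length - t) ++ (ν j).drop ((ν j).length - t)) := by
      rw [List.take_append_drop]; exact hre j
    exact (M.eval_append_iff' _ _ _).mp h2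
  choose G hG1 hG2 using hsplit
  set S : ℕ → Finset (Fin h) := fun t => Finset.univ.filter (fun j => (r i).take t <+: r j)
    with hS
  have hmemS : ∀ (t : ℕ) (j : Fin h), j ∈ S t ↔ (r i).take t <+: r j := by
    intro t j
    rw [hS]
    simp [Finset.mem_filter]
  have hanti : ∀ ⦃a b : ℕ⦄, a ≤ b → S b ⊆ S a := by
    intro a b hab j hj
    rw [hmemS] at hj ⊢
    exact (List.take_prefix_take_left hab).trans hj
  have hmemi : ∀ t, i ∈ S t := fun t => (hmemS t i).mpr (List.take_prefix _ _)
  obtain ⟨t1, t2, h12, ht2T, hSeq, hGeq⟩ := pigeon_nat' S G (ν i).length hanti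
    (fun t _ => ⟨i, hmemi t⟩) (by simpa [Fintype.card_fin] using Nat.lt_succ_of_le hlong)
  have ht1T : t1 ≤ (ν i).length := le_of_lt (lt_of_lt_of_le h12 ht2T)
  have hlen_take : ∀ t, t ≤ (ν i).length → ((r i).take t).length = t := by
    intro t ht
    rw [List.length_take, hrlen]
    omega
  have hmem2 : ∀ j ∈ S t1, (r i).take t2 <+: r j := by
    intro j hj
    rw [hSeq, hmemS] at hj
    exact hj
  have hmem1 : ∀ j ∈ S t1, (r i).take t1 <+: r j := by
    intro j hj
    rw [hmemS] at hj
    exact hj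
  have htake2 : ∀ j ∈ S t1, (r j).take t2 = (r i).take t2 := by
    intro j hj
    have := List.prefix_iff_eq_take.mp (hmem2 j hj)
    rw [hlen_take t2 ht2T] at this
    exact this.symm
  have htake1 : ∀ j ∈ S t1, (r j).take t1 = (r i).take t1 := by
    intro j hj
    have := List.prefix_iff_eq_take.mp (hmem1 j hj)
    rw [hlen_take t1 ht1T] at this
    exact this.symm
  have hlen2 : ∀ j ∈ S t1, t2 ≤ (ν j).length := by
    intro j hj
    have := (hmem2 j hj).length_le
    rw [hlen_take t2 ht2T, hrlen] at this
    exact this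
  set ν' : Fin h → List α := fun j =>
    if j ∈ S t1 then ((r i).take t1 ++ (r j).drop t2).reverse else ν j with hν'
  have hν'in : ∀ j ∈ S t1, ν' j = ((r i).take t1 ++ (r j).drop t2).reverse := by
    intro j hj
    rw [hν']
    simp [hj]
  have hν'out : ∀ j, j ∉ S t1 → ν' j = ν j := by
    intro j hj
    rw [hν']
    simp [hj]
  have hrev' : ∀ j ∈ S t1, (ν' j).reverse = (r i).take t1 ++ (r j).drop t2 := by
    intro j hj
    rw [hν'in j hj, List.reverse_reverse]
  -- forward form
  have hfwd : ∀ j ∈ S t1,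
      ν' j = (ν j).take ((ν j).length - t2) ++ (ν j).drop ((ν j).length - t1) := by
    intro j hj
    rw [hν'in j hj, ← htake1 j hj, List.reverse_append]
    congr 1
    · rw [hr]
      show ((ν j).reverse.drop t2).reverse = _
      rw [List.reverse_drop]
      simp
    · rw [hr]
      show ((ν j).reverse.take t1).reverse = _
      rw [List.reverse_take]
      simp
  -- reach
  have hreach : ∀ j, q j ∈ M.eval (ν' j) := by
    intro j
    by_cases hj : j ∈ S t1
    · rw [hfwd j hj, M.eval_append_iff']
      exact ⟨G t2 j, hG1 t2 j, by rw [← hGeq j hj]; exact hG2 t1 j⟩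
    · rw [hν'out j hj]
      exact hre j
  -- decompositions of r j
  have hU2 : ∀ j ∈ S t1, r j = (r i).take t2 ++ (r j).drop t2 := by
    intro j hj
    conv_lhs => rw [← List.take_append_drop t2 (r j)]
    rw [htake2 j hj]
  have hU1 : ∀ j ∈ S t1, r j = (r i).take t1 ++ (r j).drop t1 := by
    intro j hj
    conv_lhs => rw [← List.take_append_drop t1 (r j)]
    rw [htake1 j hj]
  -- order
  have horder : ∀ j k : Fin h, j < k → (ν' j).reverse < (ν' k).reverse := by
    intro j k hjk
    have hjk' : r j < r k := hinc j k hjk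
    by_cases hj : j ∈ S t1 <;> by_cases hk : k ∈ S t1
    · rw [hrev' j hj, hrev' k hk, append_lt_append_left_iff']
      have hx : (r i).take t2 ++ (r j).drop t2 < (r i).take t2 ++ (r k).drop t2 := by
        rw [← hU2 j hj, ← hU2 k hk]
        exact hjk'
      exact (append_lt_append_left_iff' _ _ _).mp hx
    · -- j in, k out
      rw [hrev' j hj, hν'out k hk]
      have hnk : ¬ (r i).take t1 <+: r k := fun hc => hk ((hmemS t1 k).mpr hc)
      have hind := (lex_indiff' ((r i).take t1) (r k) hnk ((r j).drop t1) ((r j).drop t2)).1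
      refine hind.mp ?_
      rw [← hU1 j hj]
      exact hjk'
    · -- j out, k in
      rw [hν'out j hj, hrev' k hk]
      have hnj : ¬ (r i).take t1 <+: r j := fun hc => hj ((hmemS t1 j).mpr hc)
      have hind := (lex_indiff' ((r i).take t1) (r j) hnj ((r k).drop t1) ((r k).drop t2)).2
      refine hind.mp ?_
      rw [← hU1 k hk]
      exact hjk'
    · rw [hν'out j hj, hν'out k hk]
      exact hjk'
  -- lengths
  have hlen'in : ∀ j ∈ S t1, (ν' j).length = t1 + ((ν j).length - t2) := by
    intro j hj
    rw [hν'in j hj, List.length_reverse, List.length_append, hlen_take t1 ht1T,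
      List.length_drop, hrlen]
  have hlenle : ∀ j, (ν' j).length ≤ (ν j).length := by
    intro j
    by_cases hj : j ∈ S t1
    · have h1 := hlen'in j hj
      have h2 := hlen2 j hj
      omega
    · rw [hν'out j hj]
  have hlenlt : (ν' i).length < (ν i).length := by
    have h1 := hlen'in i (hmemi t1)
    omega
  exact ⟨ν', hreach, horder,
    Finset.sum_lt_sum (fun j _ => hlenle j) ⟨i, Finset.mem_univ i, hlenlt⟩⟩

theorem aux_main' {α σ : Type*} [LinearOrder α] [Fintype σ] (M : PNFA α σ) {h : ℕ}
    (q : Fin h → σ) :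
    ∀ (n : ℕ) (ν : Fin h → List α), (∑ j, (ν j).length) ≤ n →
      (∀ j, q j ∈ M.eval (ν j)) →
      (∀ j k : Fin h, j < k → (ν j).reverse < (ν k).reverse) →
      ∃ ν' : Fin h → List α, (∀ j, q j ∈ M.eval (ν' j)) ∧
        (∀ j k : Fin h, j < k → (ν' j).reverse < (ν' k).reverse) ∧
        (∀ j, (ν' j).length ≤ h - 2 + ∑ t ∈ Finset.Icc 1 h, (Fintype.card σ) ^ t) := by
  intro n
  induction n with
  | zero =>
      intro ν hn hre hinc
      refine ⟨ν, hre, hinc, fun j => ?_⟩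
      have hle : (ν j).length ≤ ∑ j, (ν j).length :=
        Finset.single_le_sum (f := fun k => (ν k).length) (fun _ _ => Nat.zero_le _) (Finset.mem_univ j)
      omega
  | succ n ih =>
      intro ν hn hre hinc
      by_cases hall : ∀ j, (ν j).length ≤ h - 2 + ∑ t ∈ Finset.Icc 1 h, (Fintype.card σ) ^ t
      · exact ⟨ν, hre, hinc, hall⟩
      · push_neg at hall
        obtain ⟨i, hi⟩ := hall
        have hlong : ∑ m ∈ Finset.Icc 1 h, (Fintype.card σ) ^ m ≤ (ν i).length := by omega
        obtain ⟨ν'', h1, h2, h3⟩ := cut_step' M q ν hre hinc i hlong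
        exact ih ν'' (by omega) h1 h2

end AuxiliaryLemmas

/-- Lemma: if states `q₁, …, q_h` of an NFA are reached by co-lexicographically strictly
increasing words `ν₁ ≺ ⋯ ≺ ν_h`, then they are reached by strictly increasing words of
length at most `h - 2 + Σ_{t=1}^{h} |Q|^t`. -/
theorem exists_short_increasing_witnesses {α σ : Type*} [LinearOrder α] [Fintype σ]
    (M : PNFA α σ) (hM : M.Trim) (h : ℕ) (q : Fin h → σ) (ν : Fin h → List α)
    (hν : ∀ i, ν i ∈ M.I (q i))
    (hinc : ∀ i j : Fin h, i < j → (ν i).reverse < (ν j).reverse) :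
    ∃ ν' : Fin h → List α,
      (∀ i, ν' i ∈ M.I (q i)) ∧
      (∀ i j : Fin h, i < j → (ν' i).reverse < (ν' j).reverse) ∧
      (∀ i, (ν' i).length ≤ h - 2 + ∑ t ∈ Finset.Icc 1 h, (Fintype.card σ) ^ t) := by
  obtain ⟨ν', h1, h2, h3⟩ := aux_main' M q (∑ j, (ν j).length) ν le_rfl
    (fun j => (hν j).2) hinc
  exact ⟨ν', fun i => (M.mem_I_iff' hM (q i) (ν' i)).mpr (h1 i), h2, h3⟩
end

section
/- Let L ⊆ Σ* be a language, P a partition of Pref(L), and ∼ a P-consistent, right-invariant equivalence relation on Pref(L). Then the relation (∼^cv)^r — the right-invariant refinement of the P-convex refinement of ∼ — is P-consistent, P-convex, and right-invariant. -/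
/-- `Pref(L)`: the set of prefixes of words of `L`. -/
def PrefSet {α : Type*} (L : Set (List α)) : Set (List α) :=
  {w | ∃ v, w ++ v ∈ L}

/-- `r` is an equivalence relation on the set `S` of words. -/
def IsEquivOn {α : Type*} (S : Set (List α)) (r : List α → List α → Prop) : Prop :=
  (∀ u v, r u v → u ∈ S ∧ v ∈ S) ∧ (∀ u ∈ S, r u u) ∧
  (∀ u v, r u v → r v u) ∧ (∀ u v w, r u v → r v w → r u w)

/-- `r` respects `Pref(L)`: equivalent words have the same right extensions inside `Pref(L)`. -/
def Respects {α : Type*} (L : Set (List α)) (r : List α → List α → Prop) : Prop :=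
  ∀ u v φ, r u v → u ++ φ ∈ PrefSet L → v ++ φ ∈ PrefSet L

/-- `r` is right-invariant: it respects `Pref(L)` and is preserved under right extensions. -/
def RightInvariant {α : Type*} (L : Set (List α)) (r : List α → List α → Prop) : Prop :=
  ∀ u v φ, r u v → u ++ φ ∈ PrefSet L →
    v ++ φ ∈ PrefSet L ∧ r (u ++ φ) (v ++ φ)

/-- `r` is `P`-consistent: equivalent words lie in the same element of the partition `P`. -/
def PConsistent {α : Type*} (P : Set (Set (List α))) (r : List α → List α → Prop) : Prop :=
  ∀ u v, r u v → ∀ U ∈ P, u ∈ U → v ∈ U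

/-- `r` is `P`-convex: each class `[u]_r` is convex in `(U_u, ⪯)` for the co-lex order. -/
def PConvex {α : Type*} [LinearOrder α] (P : Set (Set (List α)))
    (r : List α → List α → Prop) : Prop :=
  ∀ u v w, r u w → ∀ U ∈ P, u ∈ U → v ∈ U →
    min u.reverse w.reverse ≤ v.reverse → v.reverse ≤ max u.reverse w.reverse → r u v

/-- `P` is a partition of the set `S`. -/
def IsPartitionOf {α : Type*} (S : Set (List α)) (P : Set (Set (List α))) : Prop :=
  (∀ U ∈ P, U.Nonempty) ∧ (⋃₀ P = S) ∧ P.Pairwise Disjoint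

/-- The `P`-convex refinement `∼^cv` of a `P`-consistent relation `∼`. -/
def cvRef {α : Type*} [LinearOrder α] (L : Set (List α)) (P : Set (Set (List α)))
    (r : List α → List α → Prop) (u v : List α) : Prop :=
  r u v ∧ ∀ w ∈ PrefSet L, (∀ U ∈ P, u ∈ U → w ∈ U) →
    min u.reverse v.reverse < w.reverse → w.reverse < max u.reverse v.reverse → r u w

/-- The right-invariant refinement `∼^r` of a relation `∼` respecting `Pref(L)`. -/
def rRef {α : Type*} (L : Set (List α)) (r : List α → List α → Prop)
    (u v : List α) : Prop :=
  u ∈ PrefSet L ∧ v ∈ PrefSet L ∧ ∀ φ : List α, u ++ φ ∈ PrefSet L → r (u ++ φ) (v ++ φ)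

lemma my_append_lt_append_iff {α : Type*} [LinearOrder α] (p x y : List α) :
    p ++ x < p ++ y ↔ x < y := by
  induction p with
  | nil => rfl
  | cons a p ih =>
    show List.Lex (· < ·) (a :: (p ++ x)) (a :: (p ++ y)) ↔ _
    rw [List.lex_cons_iff]
    exact ih

lemma my_append_le_append_iff {α : Type*} [LinearOrder α] (p x y : List α) :
    p ++ x ≤ p ++ y ↔ x ≤ y := by
  rw [← not_lt, ← not_lt, my_append_lt_append_iff]

lemma my_append_min {α : Type*} [LinearOrder α] (p x y : List α) :
    min (p ++ x) (p ++ y) = p ++ min x y := by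
  rcases le_total x y with h | h
  · rw [min_eq_left h, min_eq_left ((my_append_le_append_iff p x y).mpr h)]
  · rw [min_eq_right h, min_eq_right ((my_append_le_append_iff p y x).mpr h)]

lemma my_append_max {α : Type*} [LinearOrder α] (p x y : List α) :
    max (p ++ x) (p ++ y) = p ++ max x y := by
  rcases le_total x y with h | h
  · rw [max_eq_right h, max_eq_right ((my_append_le_append_iff p x y).mpr h)]
  · rw [max_eq_left h, max_eq_left ((my_append_le_append_iff p y x).mpr h)]

/-- Lemma: if `∼` is a `P`-consistent, right-invariant equivalence relation on `Pref(L)`,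
then `(∼^cv)^r` is `P`-consistent, `P`-convex and right-invariant. -/
theorem cvRef_rRef_consistent_convex_rightInvariant {α : Type*} [LinearOrder α]
    (L : Set (List α)) (P : Set (Set (List α))) (hP : IsPartitionOf (PrefSet L) P)
    (r : List α → List α → Prop) (hr : IsEquivOn (PrefSet L) r)
    (hcons : PConsistent P r) (hri : RightInvariant L r) :
    PConsistent P (rRef L (cvRef L P r)) ∧
    PConvex P (rRef L (cvRef L P r)) ∧
    RightInvariant L (rRef L (cvRef L P r)) := by
  obtain ⟨hdom, hrefl, hsymm, htrans⟩ := hr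
  obtain ⟨hne, hcover, hdisj⟩ := hP
  -- any two elements of the same block lie together in every block containing the first
  have huniq : ∀ U ∈ P, ∀ u v : List α, u ∈ U → v ∈ U → ∀ U' ∈ P, u ∈ U' → v ∈ U' := by
    intro U hU u v hu hv U' hU' hu'
    by_cases h : U' = U
    · exact h ▸ hv
    · exact absurd hu (Set.disjoint_left.mp (hdisj hU' hU h) hu')
  -- from rRef with φ = [] we get cvRef u v
  have hnil : ∀ u v, rRef L (cvRef L P r) u v → cvRef L P r u v := by
    intro u v huv
    have := huv.2.2 [] (by simpa using huv.1)
    simpa using this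
  refine ⟨?_, ?_, ?_⟩
  · -- PConsistent
    intro u v huv U hU hu
    exact hcons u v (hnil u v huv).1 U hU hu
  · -- PConvex
    intro u v w hrw U hU hu hv hmin hmax
    obtain ⟨huP, hwP, hall⟩ := hrw
    have hvP : v ∈ PrefSet L := hcover ▸ Set.mem_sUnion.mpr ⟨U, hU, hv⟩
    have hsuw : cvRef L P r u w := hnil u w ⟨huP, hwP, hall⟩
    -- first, establish r u v
    have hruv : r u v := by
      rcases hmin.lt_or_eq with hlt1 | heq1
      · rcases hmax.lt_or_eq with hlt2 | heq2
        · exact hsuw.2 v hvP (huniq U hU u v hu hv) hlt1 hlt2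
        · rcases max_choice u.reverse w.reverse with h | h
          · have hvu : v = u := List.reverse_injective (heq2.trans h)
            exact hvu ▸ hrefl u huP
          · have hvw : v = w := List.reverse_injective (heq2.trans h)
            exact hvw ▸ hsuw.1
      · rcases min_choice u.reverse w.reverse with h | h
        · have hvu : v = u := List.reverse_injective (heq1.symm.trans h)
          exact hvu ▸ hrefl u huP
        · have hvw : v = w := List.reverse_injective (heq1.symm.trans h)
          exact hvw ▸ hsuw.1
    refine ⟨huP, hvP, ?_⟩
    intro φ hφ
    have hsφ : cvRef L P r (u ++ φ) (w ++ φ) := hall φ hφ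
    refine ⟨(hri u v φ hruv hφ).2, ?_⟩
    intro w' hw'P hw'U hlt1 hlt2
    rw [List.reverse_append, List.reverse_append, my_append_min] at hlt1
    rw [List.reverse_append, List.reverse_append, my_append_max] at hlt2
    refine hsφ.2 w' hw'P hw'U ?_ ?_
    · rw [List.reverse_append, List.reverse_append, my_append_min]
      refine lt_of_le_of_lt ?_ hlt1
      rw [my_append_le_append_iff]
      exact le_min (min_le_left _ _) hmin
    · rw [List.reverse_append, List.reverse_append, my_append_max]
      refine lt_of_lt_of_le hlt2 ?_
      rw [my_append_le_append_iff]
      exact max_le (le_max_left _ _) hmax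
  · -- RightInvariant
    intro u v φ huv hφ
    obtain ⟨huP, hvP, hall⟩ := huv
    have hs := hall φ hφ
    have hvφ : v ++ φ ∈ PrefSet L := (hdom _ _ hs.1).2
    refine ⟨hvφ, hφ, hvφ, ?_⟩
    intro ψ hψ
    simp only [List.append_assoc]
    exact hall (φ ++ ψ) (by rwa [← List.append_assoc])
end
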